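/- arXiv:2003.00782 — 6 statements merged into one kernel-verified Lean document; each statement's English description precedes it below -/
import Mathlib

section
/- The trace of ρ(α) lies in 2ℤ[ε] for every α in the integral group ring ℤ[G], i.e. tr(ρ(ℤ[G])) ⊆ 2ℤ[ε]. -/
open MonoidAlgebra

/-- The quaternion group of order 8. -/
abbrev Q8 : Type := QuaternionGroup 2

/-- The cyclic group of order `p`. -/
abbrev Cp (p : ℕ) : Type := Multiplicative (ZMod p)

/-- `G = Q₈ × C_p`. -/
abbrev Gp (p : ℕ) : Type := Q8 × Cp p

/-- The element `a` of `Q₈`. -/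
def aQ : Q8 := QuaternionGroup.a 1
/-- The element `b` of `Q₈`. -/
def bQ : Q8 := QuaternionGroup.xa 0
/-- The element `c = ab` of `Q₈`. -/
def cQ : Q8 := aQ * bQ
/-- The element `z = a²` of `Q₈`. -/
def zQ : Q8 := aQ * aQ
/-- The generator `t` of `C_p`. -/
def tC (p : ℕ) : Cp p := Multiplicative.ofAdd (1 : ZMod p)

/-- The inclusion `ℤ[G] → ℚ[G]` of an integral group ring into the rational group algebra. -/
noncomputable def iotaG (G : Type) [Monoid G] :
    MonoidAlgebra ℤ G →+* MonoidAlgebra ℚ G :=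
  MonoidAlgebra.liftNCRingHom (MonoidAlgebra.singleOneRingHom.comp (Int.castRingHom ℚ))
    (MonoidAlgebra.of ℚ G) (fun r g => by
      show MonoidAlgebra.single 1 ((r : ℚ)) * MonoidAlgebra.single g 1 =
        MonoidAlgebra.single g 1 * MonoidAlgebra.single 1 ((r : ℚ))
      rw [MonoidAlgebra.single_mul_single, MonoidAlgebra.single_mul_single,
        one_mul, mul_one, one_mul, mul_one])

/-- The augmentation of an element of a group ring: the sum of its coefficients
(the image under the map sending every group element to `1`). -/
def augm {R : Type} [Semiring R] {G : Type} [Monoid G] (α : MonoidAlgebra R G) : R :=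
  Finsupp.sum α.coeff fun _ c => c

/-- The embedding `ℚ[C_p] → ℚ[Q₈ × C_p]` given by `τ ↦ (1, τ)`. -/
noncomputable def kapQ (p : ℕ) : MonoidAlgebra ℚ (Cp p) →+* MonoidAlgebra ℚ (Gp p) :=
  MonoidAlgebra.mapDomainRingHom ℚ (MonoidHom.inr Q8 (Cp p))

/-- The embedding `ℤ[C_p] → ℤ[Q₈ × C_p]` given by `τ ↦ (1, τ)`. -/
noncomputable def kapZ (p : ℕ) : MonoidAlgebra ℤ (Cp p) →+* MonoidAlgebra ℤ (Gp p) :=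
  MonoidAlgebra.mapDomainRingHom ℤ (MonoidHom.inr Q8 (Cp p))

/-- The composite embedding `ℤ[C_p] → ℚ[Q₈ × C_p]`. -/
noncomputable def kapZQ (p : ℕ) : MonoidAlgebra ℤ (Cp p) →+* MonoidAlgebra ℚ (Gp p) :=
  (iotaG (Gp p)).comp (kapZ p)

/-- `u = s + n` is the additive Jordan decomposition of `u` in the rational group algebra:
`s` is semisimple (its minimal polynomial over `ℚ` is squarefree, equivalently has no
repeated roots in the algebraic closure), `n` is nilpotent, and `s`, `n` commute. -/
def IsJordanDecomp {G : Type} [Monoid G] (u s n : MonoidAlgebra ℚ G) : Prop :=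
  u = s + n ∧ Squarefree (minpoly ℚ s) ∧ IsNilpotent n ∧ Commute s n


section Aux

lemma q8_cases (q : Q8) : q = 1 ∨ q = aQ ∨ q = aQ*aQ ∨ q = aQ*aQ*aQ ∨ q = bQ ∨
    q = bQ*aQ ∨ q = bQ*(aQ*aQ) ∨ q = bQ*(aQ*aQ*aQ) := by
  revert q; decide

lemma iotaG_single {G : Type} [Monoid G] (g : G) (b : ℤ) :
    iotaG G (MonoidAlgebra.single g b) = MonoidAlgebra.single g (b : ℚ) := by
  simp [iotaG, MonoidAlgebra.liftNCRingHom, MonoidAlgebra.liftNC_single,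
    MonoidAlgebra.singleOneRingHom, MonoidAlgebra.single_mul_single]
  rw [MonoidAlgebra.intCast_def, MonoidAlgebra.single_mul_single, one_mul, mul_one]

end Aux

theorem trace_rho_mem_two_int_eps
    (p : ℕ) [hp : Fact p.Prime] (hp2 : p ≠ 2)
    (hord : Even (orderOf (2 : ZMod p)))
    (ε : CyclotomicField p ℚ) (hε : IsPrimitiveRoot ε p)
    (r s : CyclotomicField p ℚ)
    (hr : r ∈ Algebra.adjoin ℤ {ε}) (hs : s ∈ Algebra.adjoin ℤ {ε})
    (hrs : r ^ 2 + s ^ 2 = -1)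
    (ρ : MonoidAlgebra ℚ (Gp p) →+* Matrix (Fin 2) (Fin 2) (CyclotomicField p ℚ))
    (hρa : ρ (MonoidAlgebra.of ℚ (Gp p) (aQ, 1)) = !![0, 1; -1, 0])
    (hρb : ρ (MonoidAlgebra.of ℚ (Gp p) (bQ, 1)) = !![r, s; s, -r])
    (hρt : ρ (MonoidAlgebra.of ℚ (Gp p) (1, tC p)) = !![ε, 0; 0, ε]) :
    ∀ β : MonoidAlgebra ℤ (Gp p),
      ∃ y ∈ Algebra.adjoin ℤ {ε}, Matrix.trace (ρ (iotaG (Gp p) β)) = 2 * y := by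
  classical
  -- multiplicativity in the Q₈ factor
  have hmulQ : ∀ u v : Q8, ρ (MonoidAlgebra.of ℚ (Gp p) (u*v, 1)) =
      ρ (MonoidAlgebra.of ℚ (Gp p) (u, 1)) * ρ (MonoidAlgebra.of ℚ (Gp p) (v, 1)) := by
    intro u v
    rw [← map_mul, ← map_mul]
    congr 1
    rw [Prod.mk_mul_mk, mul_one]
  -- trace on the Q₈ factor is an even integer
  have hq : ∀ q : Q8, ∃ m : ℤ, (ρ (MonoidAlgebra.of ℚ (Gp p) (q, 1))).trace = 2 * (m : (CyclotomicField p ℚ)) := by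
    intro q
    rcases q8_cases q with h | h | h | h | h | h | h | h <;> subst h
    · refine ⟨1, ?_⟩
      have h1 : ((1 : Q8), (1 : Cp p)) = (1 : Gp p) := rfl
      rw [h1, map_one, map_one, Matrix.trace_one]
      norm_num
    · exact ⟨0, by rw [hρa]; norm_num [Matrix.trace_fin_two_of]⟩
    · refine ⟨-1, ?_⟩
      rw [hmulQ, hρa]
      norm_num [Matrix.mul_fin_two, Matrix.trace_fin_two_of]
    · refine ⟨0, ?_⟩
      rw [hmulQ, hmulQ, hρa]
      norm_num [Matrix.mul_fin_two, Matrix.trace_fin_two_of]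
    · refine ⟨0, ?_⟩
      rw [hρb]
      norm_num [Matrix.trace_fin_two_of]
    · refine ⟨0, ?_⟩
      rw [hmulQ, hρa, hρb]
      simp [Matrix.mul_fin_two, Matrix.trace_fin_two_of]
    · refine ⟨0, ?_⟩
      rw [hmulQ, hmulQ, hρa, hρb]
      simp [Matrix.mul_fin_two, Matrix.trace_fin_two_of]
    · refine ⟨0, ?_⟩
      rw [hmulQ, hmulQ, hmulQ, hρa, hρb]
      simp [Matrix.mul_fin_two, Matrix.trace_fin_two_of]
  -- the C_p factor acts by a power of ε times the identity
  have ht1 : ρ (MonoidAlgebra.of ℚ (Gp p) (1, tC p)) = ε • (1 : Matrix (Fin 2) (Fin 2) (CyclotomicField p ℚ)) := by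
    rw [hρt]
    ext i j
    fin_cases i <;> fin_cases j <;> simp [Matrix.one_apply]
  have hx : ∀ x : Cp p, ∃ k : ℕ,
      ρ (MonoidAlgebra.of ℚ (Gp p) (1, x)) = ε ^ k • (1 : Matrix (Fin 2) (Fin 2) (CyclotomicField p ℚ)) := by
    intro x
    refine ⟨(Multiplicative.toAdd x).val, ?_⟩
    have hxk : ((1 : Q8), x) = ((1 : Q8), tC p) ^ (Multiplicative.toAdd x).val := by
      have h2 : (tC p) ^ (Multiplicative.toAdd x).val = x := by
        rw [tC, ← ofAdd_nsmul]
        simp [ZMod.natCast_val, ZMod.cast_id]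
      rw [Prod.pow_mk, one_pow, h2]
    rw [hxk, map_pow, map_pow, ht1, smul_pow, one_pow]
  -- trace of ρ on group elements
  have key : ∀ g : Gp p, ∃ y ∈ Algebra.adjoin ℤ {ε},
      (ρ (MonoidAlgebra.of ℚ (Gp p) g)).trace = 2 * y := by
    rintro ⟨q, x⟩
    obtain ⟨m, hm⟩ := hq q
    obtain ⟨k, hk⟩ := hx x
    have hmix : ρ (MonoidAlgebra.of ℚ (Gp p) (q, x)) =
        ρ (MonoidAlgebra.of ℚ (Gp p) (q, 1)) * ρ (MonoidAlgebra.of ℚ (Gp p) (1, x)) := by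
      rw [← map_mul, ← map_mul]
      congr 1
      rw [Prod.mk_mul_mk, mul_one, one_mul]
    refine ⟨(m : (CyclotomicField p ℚ)) * ε ^ k, ?_, ?_⟩
    · refine mul_mem ?_ (pow_mem (Algebra.self_mem_adjoin_singleton ℤ ε) k)
      have h3 := Subalgebra.algebraMap_mem (Algebra.adjoin ℤ ({ε} : Set (CyclotomicField p ℚ))) m
      rwa [eq_intCast] at h3
    · rw [hmix, hk, Matrix.mul_smul, mul_one, Matrix.trace_smul, hm, smul_eq_mul]
      ring
  -- induction over the group ring
  intro β
  induction β using MonoidAlgebra.induction_linear with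
  | zero => exact ⟨0, zero_mem _, by simp⟩
  | add f g hf hg =>
    obtain ⟨y1, hy1, e1⟩ := hf
    obtain ⟨y2, hy2, e2⟩ := hg
    refine ⟨y1 + y2, add_mem hy1 hy2, ?_⟩
    rw [map_add, map_add, Matrix.trace_add, e1, e2]
    ring
  | single g b =>
    obtain ⟨y, hy, e⟩ := key g
    refine ⟨(b : (CyclotomicField p ℚ)) * y, ?_, ?_⟩
    · refine mul_mem ?_ hy
      have h3 := Subalgebra.algebraMap_mem (Algebra.adjoin ℤ ({ε} : Set (CyclotomicField p ℚ))) b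
      rwa [eq_intCast] at h3
    · have hsb : (MonoidAlgebra.single g (b : ℚ) : MonoidAlgebra ℚ (Gp p)) =
          b • MonoidAlgebra.single g (1 : ℚ) := by
        rw [MonoidAlgebra.smul_single]; norm_num
      have hof : MonoidAlgebra.of ℚ (Gp p) g = MonoidAlgebra.single g (1 : ℚ) := rfl
      rw [iotaG_single, hsb, map_zsmul, ← Int.cast_smul_eq_zsmul (CyclotomicField p ℚ),
          Matrix.trace_smul, ← hof, e, smul_eq_mul]
      push_cast
      ring
end

section
/- Let α = Σ_{g ∈ Q₈} α_g(t) g ∈ ℚ[G] with α_g(t) ∈ ℚ[C_p], and set ξ_g = α_g(ε) − α_{gz}(ε) for g ∈ {1, a, b, c}. Then ρ(α) is a nilpotent matrix if and only if ξ_1 = 0 and ξ_a² + ξ_b² + ξ_c² = 0. -/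
open MonoidAlgebra

theorem nilp2_iff {K : Type*} [Field K] [CharZero K] (M : Matrix (Fin 2) (Fin 2) K) :
    IsNilpotent M ↔ M.trace = 0 ∧ M.det = 0 := by
  constructor
  · intro h
    exact ⟨(Matrix.isNilpotent_trace_of_isNilpotent h).eq_zero, by
      obtain ⟨k, hk⟩ := h
      have : M.det ^ k = 0 := by rw [← Matrix.det_pow, hk]; simp
      exact (pow_eq_zero_iff'.mp this).1⟩
  · rintro ⟨htr, hdet⟩
    refine ⟨2, ?_⟩
    rw [Matrix.trace_fin_two] at htr
    rw [Matrix.det_fin_two] at hdet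
    set a := M 0 0; set b := M 0 1; set c := M 1 0; set d := M 1 1
    have hM : M = !![a, b; c, d] := Matrix.eta_fin_two M
    rw [hM, pow_two, Matrix.mul_fin_two]
    have e1 : a * a + b * c = 0 := by linear_combination a * htr - hdet
    have e2 : a * b + b * d = 0 := by linear_combination b * htr
    have e3 : c * a + d * c = 0 := by linear_combination c * htr
    have e4 : c * b + d * d = 0 := by linear_combination d * htr - hdet
    rw [e1, e2, e3, e4]
    ext i j
    fin_cases i <;> fin_cases j <;> simp

set_option maxHeartbeats 1000000 in
theorem rho_nilpotent_iff
    (p : ℕ) [hp : Fact p.Prime] (hp2 : p ≠ 2)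
    (hord : Even (orderOf (2 : ZMod p)))
    (ε : CyclotomicField p ℚ) (hε : IsPrimitiveRoot ε p)
    (r s : CyclotomicField p ℚ)
    (hr : r ∈ Algebra.adjoin ℤ {ε}) (hs : s ∈ Algebra.adjoin ℤ {ε})
    (hrs : r ^ 2 + s ^ 2 = -1)
    (ρ : MonoidAlgebra ℚ (Gp p) →+* Matrix (Fin 2) (Fin 2) (CyclotomicField p ℚ))
    (hρa : ρ (MonoidAlgebra.of ℚ (Gp p) (aQ, 1)) = !![0, 1; -1, 0])
    (hρb : ρ (MonoidAlgebra.of ℚ (Gp p) (bQ, 1)) = !![r, s; s, -r])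
    (hρt : ρ (MonoidAlgebra.of ℚ (Gp p) (1, tC p)) = !![ε, 0; 0, ε])
    (δf : MonoidAlgebra ℚ (Cp p) →+* CyclotomicField p ℚ)
    (hδ : δf (MonoidAlgebra.of ℚ (Cp p) (tC p)) = ε)
    (αf : Q8 → MonoidAlgebra ℚ (Cp p)) (α : MonoidAlgebra ℚ (Gp p))
    (hα : α = ∑ g : Q8, kapQ p (αf g) * MonoidAlgebra.of ℚ (Gp p) (g, 1)) :
    IsNilpotent (ρ α) ↔
      ((δf (αf 1) - δf (αf zQ) = 0) ∧
       (δf (αf aQ) - δf (αf (aQ * zQ))) ^ 2 + (δf (αf bQ) - δf (αf (bQ * zQ))) ^ 2 +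
         (δf (αf cQ) - δf (αf (cQ * zQ))) ^ 2 = 0) := by
  
  haveI : NeZero p := ⟨hp.out.ne_zero⟩
  -- the representation sends kapQ-images to scalar matrices
  have hscal : ρ.comp (kapQ p) = (Matrix.scalar (Fin 2)).comp δf := by
    have hof : ∀ g : Cp p, g = tC p ^ (g.toAdd).val := by
      intro g
      have h1 : ((g.toAdd).val • (1 : ZMod p)) = g.toAdd := by
        simp [nsmul_eq_mul, ZMod.natCast_val, ZMod.cast_id]
      calc g = Multiplicative.ofAdd (g.toAdd) := rfl
      _ = Multiplicative.ofAdd ((g.toAdd).val • (1 : ZMod p)) := by rw [h1]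
      _ = tC p ^ (g.toAdd).val := by rw [ofAdd_nsmul]; rfl
    have ht : (ρ.comp (kapQ p)) (MonoidAlgebra.of ℚ (Cp p) (tC p)) = Matrix.scalar (Fin 2) ε := by
      have h2 : (kapQ p) (MonoidAlgebra.of ℚ (Cp p) (tC p)) =
          MonoidAlgebra.of ℚ (Gp p) (1, tC p) := by
        simp [kapQ, MonoidAlgebra.of_apply, MonoidAlgebra.mapDomainRingHom]
      rw [RingHom.comp_apply, h2, hρt]
      ext i j; fin_cases i <;> fin_cases j <;> simp [Matrix.scalar]
    apply MonoidAlgebra.ringHom_ext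
    · intro b
      have h1 : (singleOneRingHom : ℚ →+* MonoidAlgebra ℚ (Cp p)) b =
          MonoidAlgebra.single 1 b := rfl
      rw [← h1, ← RingHom.comp_apply, ← RingHom.comp_apply]
      exact RingHom.congr_fun (RingHom.ext_rat _ _) b
    · intro g
      have h1 : (MonoidAlgebra.single g 1 : MonoidAlgebra ℚ (Cp p)) =
          MonoidAlgebra.of ℚ (Cp p) g := rfl
      rw [h1, hof g, map_pow, map_pow, ht, RingHom.comp_apply, map_pow, hδ, map_pow]
  have hk : ∀ τ, ρ (kapQ p τ) = Matrix.scalar (Fin 2) (δf τ) := RingHom.congr_fun hscal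
  have hmulQ : ∀ g h : Q8, ρ (MonoidAlgebra.of ℚ (Gp p) (g * h, 1)) =
      ρ (MonoidAlgebra.of ℚ (Gp p) (g, 1)) * ρ (MonoidAlgebra.of ℚ (Gp p) (h, 1)) := by
    intro g h
    rw [show ((g * h : Q8), (1 : Cp p)) = (g, 1) * (h, 1) by rw [Prod.mk_mul_mk, mul_one],
      map_mul, map_mul]
  have hone : ρ (MonoidAlgebra.of ℚ (Gp p) ((1 : Q8), 1)) = 1 := by
    rw [show ((1 : Q8), (1 : Cp p)) = 1 from rfl, map_one, map_one]
  -- explicit form of ρ α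
  have hMat : ρ α = !![(δf (αf 1) - δf (αf (aQ * aQ))) + (δf (αf bQ) - δf (αf (bQ * (aQ * aQ)))) * r + (δf (αf (aQ * bQ)) - δf (αf (bQ * aQ))) * s,
      (δf (αf aQ) - δf (αf (aQ * (aQ * aQ)))) + (δf (αf bQ) - δf (αf (bQ * (aQ * aQ)))) * s - (δf (αf (aQ * bQ)) - δf (αf (bQ * aQ))) * r;
      -(δf (αf aQ) - δf (αf (aQ * (aQ * aQ)))) + (δf (αf bQ) - δf (αf (bQ * (aQ * aQ)))) * s - (δf (αf (aQ * bQ)) - δf (αf (bQ * aQ))) * r,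
      (δf (αf 1) - δf (αf (aQ * aQ))) - (δf (αf bQ) - δf (αf (bQ * (aQ * aQ)))) * r - (δf (αf (aQ * bQ)) - δf (αf (bQ * aQ))) * s] := by
    rw [hα, map_sum]
    rw [show (Finset.univ : Finset Q8) = {QuaternionGroup.a 0, QuaternionGroup.a 1,
      QuaternionGroup.a 2, QuaternionGroup.a 3, QuaternionGroup.xa 0, QuaternionGroup.xa 1,
      QuaternionGroup.xa 2, QuaternionGroup.xa 3} from by decide]
    rw [Finset.sum_insert (by decide), Finset.sum_insert (by decide),
      Finset.sum_insert (by decide), Finset.sum_insert (by decide),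
      Finset.sum_insert (by decide), Finset.sum_insert (by decide),
      Finset.sum_insert (by decide), Finset.sum_singleton]
    rw [show (QuaternionGroup.a 0 : Q8) = 1 from by decide,
      show (QuaternionGroup.a 1 : Q8) = aQ from by decide,
      show (QuaternionGroup.a 2 : Q8) = aQ * aQ from by decide,
      show (QuaternionGroup.a 3 : Q8) = aQ * (aQ * aQ) from by decide,
      show (QuaternionGroup.xa 0 : Q8) = bQ from by decide,
      show (QuaternionGroup.xa 1 : Q8) = bQ * aQ from by decide,
      show (QuaternionGroup.xa 2 : Q8) = bQ * (aQ * aQ) from by decide,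
      show (QuaternionGroup.xa 3 : Q8) = aQ * bQ from by decide]
    simp only [map_mul, hk, hmulQ, hone, hρa, hρb]
    simp only [Matrix.scalar_apply, ← Matrix.smul_eq_diagonal_mul, Matrix.one_fin_two,
      Matrix.mul_fin_two]
    ext i j
    fin_cases i <;> fin_cases j <;>
      simp [Matrix.add_apply, Matrix.smul_apply, smul_eq_mul] <;> ring
  rw [hMat, nilp2_iff, Matrix.trace_fin_two_of, Matrix.det_fin_two_of]
  rw [show cQ * zQ = bQ * aQ from by decide,
    show cQ = aQ * bQ from rfl,
    show zQ = aQ * aQ from rfl]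
  set x1 := δf (αf 1) - δf (αf (aQ * aQ)) with hx1d
  set xa := δf (αf aQ) - δf (αf (aQ * (aQ * aQ))) with hxad
  set xb := δf (αf bQ) - δf (αf (bQ * (aQ * aQ))) with hxbd
  set xc := δf (αf (aQ * bQ)) - δf (αf (bQ * aQ)) with hxcd
  constructor
  · rintro ⟨h1, h2⟩
    have hx1 : x1 = 0 := by
      have h2ne : (2 : CyclotomicField p ℚ) ≠ 0 := two_ne_zero
      have h22 : (2 : CyclotomicField p ℚ) * x1 = 0 := by linear_combination h1
      rcases mul_eq_zero.mp h22 with h | h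
      · exact absurd h h2ne
      · exact h
    refine ⟨hx1, ?_⟩
    linear_combination h2 + (xb ^ 2 + xc ^ 2) * hrs - x1 * hx1
  · rintro ⟨hx1, h2⟩
    constructor
    · linear_combination 2 * hx1
    · linear_combination x1 * hx1 + h2 - (xb ^ 2 + xc ^ 2) * hrs
end

section
/- Let α = Σ_{g ∈ Q₈} α_g(t) g ∈ ℚ[G] with α_g(t) ∈ ℚ[C_p]. Then α is nilpotent if and only if α = Σ_{g ∈ {a,b,c}} α_g(t) g (1 − z) with α_a(t)² + α_b(t)² + α_c(t)² = 0 in ℚ[C_p]. In this case α² = 0 and the augmentation α_g(1) = 0 for each g ∈ {a, b, c}. -/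
open MonoidAlgebra
open scoped Quaternion

namespace Q8Hom
variable {R : Type*} [Monoid R]

def xp (x : R) (i : ZMod 4) : R := x ^ i.val

lemma pow_eq_xp {x : R} (hx : x ^ 4 = 1) (m : ℕ) : x ^ m = xp x (m : ZMod 4) := by
  rw [pow_eq_pow_mod m hx, xp, ZMod.val_natCast]

lemma xp_add {x : R} (hx : x ^ 4 = 1) (i j : ZMod 4) :
    xp x (i + j) = xp x i * xp x j := by
  rw [xp, xp, xp, ZMod.val_add, ← pow_eq_pow_mod _ hx, pow_add]

lemma pow_mul_y {x y : R} (hxy : x * y = y * x ^ 3) (m : ℕ) :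
    x ^ m * y = y * x ^ (3 * m) := by
  induction m with
  | zero => simp
  | succ n ih =>
    calc x ^ (n + 1) * y = x * (x ^ n * y) := by rw [← mul_assoc, ← pow_succ']
    _ = x * y * x ^ (3 * n) := by rw [ih, mul_assoc]
    _ = y * (x ^ 3 * x ^ (3 * n)) := by rw [hxy, mul_assoc]
    _ = y * x ^ (3 * (n + 1)) := by rw [← pow_add]; ring_nf

lemma xp_mul_y {x y : R} (hx : x ^ 4 = 1) (hxy : x * y = y * x ^ 3) (i : ZMod 4) :
    xp x i * y = y * xp x (3 * i) := by
  rw [xp, pow_mul_y hxy, pow_eq_xp hx (3 * i.val)]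
  congr 1

/-- The monoid hom `Q₈ → R` sending `a i ↦ x^i`, `xa i ↦ y x^i`. -/
def hom (x y : R) (hx : x ^ 4 = 1) (hxy : x * y = y * x ^ 3) (hy2 : y * y = x ^ 2) :
    QuaternionGroup 2 →* R where
  toFun := fun g => match g with
    | .a i => xp x i
    | .xa i => y * xp x i
  map_one' := by
    show xp x 0 = 1
    simp [xp, ZMod.val_zero]
  map_mul' := by
    rintro (i | i) (j | j)
    · show xp x (i + j) = xp x i * xp x j
      exact xp_add hx i j
    · show y * xp x (j - i) = xp x i * (y * xp x j)
      rw [← mul_assoc, xp_mul_y hx hxy, mul_assoc, ← xp_add hx]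
      congr 2
      have : ∀ i j : ZMod 4, j - i = 3 * i + j := by decide
      exact this i j
    · show y * xp x (i + j) = y * xp x i * xp x j
      rw [mul_assoc, xp_add hx]
    · show xp x ((2 : ℕ) + j - i) = y * xp x i * (y * xp x j)
      rw [mul_assoc, ← mul_assoc (xp x i), xp_mul_y hx hxy, ← mul_assoc, ← mul_assoc, hy2,
        pow_eq_xp hx 2, ← xp_add hx, ← xp_add hx]
      congr 1
      have : ∀ i j : ZMod 4, (2 : ℕ) + j - i = (2 : ℕ) + 3 * i + j := by decide
      exact this i j

@[simp] lemma hom_a (x y : R) (hx hxy hy2) (i : ZMod 4) :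
    hom x y hx hxy hy2 (.a i) = x ^ i.val := rfl

@[simp] lemma hom_xa (x y : R) (hx hxy hy2) (i : ZMod 4) :
    hom x y hx hxy hy2 (.xa i) = y * x ^ i.val := rfl

end Q8Hom

lemma quat_sq {B : Type} [CommRing B] (q : Quaternion B) :
    q * q = (2 * q.re) • q - (Quaternion.normSq q) • 1 := by
  ext <;> simp [Quaternion.normSq_def', Quaternion.re_mul, Quaternion.imI_mul,
    Quaternion.imJ_mul, Quaternion.imK_mul, smul_eq_mul] <;> ring

lemma quat_pow {B : Type} [CommRing B] (q : Quaternion B) (hN : Quaternion.normSq q = 0)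
    (m : ℕ) : q ^ (m + 1) = (2 * q.re) ^ m • q := by
  induction m with
  | zero => simp
  | succ n ih =>
    rw [pow_succ, ih, smul_mul_assoc, quat_sq, hN]
    simp [smul_smul, pow_succ, mul_comm]

lemma quat_nilp {B : Type} [CommRing B] [Algebra ℚ B] [IsReduced B] {q : Quaternion B}
    (h : IsNilpotent q) :
    q.re = 0 ∧ q.imI ^ 2 + q.imJ ^ 2 + q.imK ^ 2 = 0 := by
  obtain ⟨n, hn⟩ := h
  have hN : Quaternion.normSq q = 0 := by
    have : (Quaternion.normSq q) ^ n = 0 := by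
      rw [← map_pow, hn, map_zero]
    exact IsReduced.eq_zero _ ⟨n, this⟩
  have hq : q ^ (n + 1) = 0 := by rw [pow_succ, hn, zero_mul]
  rw [quat_pow q hN n] at hq
  have hre : (2 * q.re) ^ n * q.re = 0 := by
    have := congrArg QuaternionAlgebra.re hq
    simpa [smul_eq_mul] using this
  have h2re : (2 * q.re) = 0 := by
    refine IsReduced.eq_zero _ ⟨n + 1, ?_⟩
    rw [pow_succ]
    calc (2 * q.re) ^ n * (2 * q.re) = 2 * ((2 * q.re) ^ n * q.re) := by ring
    _ = 0 := by rw [hre, mul_zero]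
  have hre0 : q.re = 0 := by
    have h2 : (2 : B) = algebraMap ℚ B 2 := by
      rw [map_ofNat]
    have hz : algebraMap ℚ B 2 * q.re = 0 := by rw [← h2]; exact h2re
    have h3 := congrArg (fun b => algebraMap ℚ B (1/2) * b) hz
    simp only [← mul_assoc, ← map_mul, mul_zero] at h3
    norm_num at h3
    exact h3
  refine ⟨hre0, ?_⟩
  have := Quaternion.normSq_def' q
  rw [hN, hre0] at this
  linear_combination -this

lemma reduced_of_ss (B : Type) [CommRing B] [IsSemisimpleRing B] : IsReduced B := by
  have h := IsSemisimpleModule.annihilator_isRadical B (M := B)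
  have hann : Module.annihilator B B = ⊥ := by
    rw [eq_bot_iff]
    intro y hy
    have := Module.mem_annihilator.mp hy 1
    simpa using this
  rw [hann] at h
  constructor
  rintro x ⟨n, hn⟩
  have : x ∈ (⊥ : Ideal B).radical := ⟨n, by simp [hn]⟩
  simpa using h this


lemma redB (p : ℕ) [Fact p.Prime] : IsReduced (MonoidAlgebra ℚ (Cp p)) := by
  haveI : NeZero ((Fintype.card (Cp p) : ℚ)) := by
    constructor
    simp [Cp, ZMod.card]
    exact_mod_cast (Fact.out : p.Prime).ne_zero
  exact reduced_of_ss _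


namespace NQ8
variable (p : ℕ)

local notation "B" => MonoidAlgebra ℚ (Cp p)

lemma sum_univ_Q8 {M : Type*} [AddCommMonoid M] (f : Q8 → M) :
    ∑ g : Q8, f g = f (.a 0) + f (.a 1) + f (.a 2) + f (.a 3)
      + f (.xa 0) + f (.xa 1) + f (.xa 2) + f (.xa 3) := by
  rw [show (Finset.univ : Finset Q8) =
    {.a 0, .a 1, .a 2, .a 3, .xa 0, .xa 1, .xa 2, .xa 3} from by decide]
  rw [Finset.sum_insert (by decide), Finset.sum_insert (by decide),
    Finset.sum_insert (by decide), Finset.sum_insert (by decide),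
    Finset.sum_insert (by decide), Finset.sum_insert (by decide),
    Finset.sum_insert (by decide), Finset.sum_singleton]
  abel

lemma kapQ_single (t : Cp p) (r : ℚ) :
    kapQ p (MonoidAlgebra.single t r) = MonoidAlgebra.single ((1 : Q8), t) r := by
  show MonoidAlgebra.mapDomain _ (MonoidAlgebra.single t r) = _
  rw [MonoidAlgebra.mapDomain_single]
  rfl

-- characters
def chiHom (s₁ s₂ : ℚ) (h₁ : s₁ = 1 ∨ s₁ = -1) (h₂ : s₂ = 1 ∨ s₂ = -1) : Q8 →* ℚ :=
  Q8Hom.hom s₁ s₂ (by rcases h₁ with h | h <;> rw [h] <;> norm_num)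
    (by rcases h₁ with h | h <;> rcases h₂ with h' | h' <;> rw [h, h'] <;> norm_num)
    (by rcases h₁ with h | h <;> rcases h₂ with h' | h' <;> rw [h, h'] <;> norm_num)

noncomputable def psiH (s₁ s₂ : ℚ) (h₁ : s₁ = 1 ∨ s₁ = -1) (h₂ : s₂ = 1 ∨ s₂ = -1) :
    MonoidAlgebra ℚ (Gp p) →ₐ[ℚ] B :=
  MonoidAlgebra.lift ℚ B (Gp p)
    (MonoidHom.coprod ((algebraMap ℚ B).toMonoidHom.comp (chiHom s₁ s₂ h₁ h₂))
      (MonoidAlgebra.of ℚ (Cp p)))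

lemma psiH_kapQ (s₁ s₂ h₁ h₂) (β : B) : psiH p s₁ s₂ h₁ h₂ (kapQ p β) = β := by
  induction β using MonoidAlgebra.induction_linear with
  | zero => rw [map_zero, map_zero]
  | add f g hf hg => rw [map_add, map_add, hf, hg]
  | single t r =>
    rw [kapQ_single, psiH, MonoidAlgebra.lift_single, MonoidHom.coprod_apply]
    simp only [MonoidHom.comp_apply, map_one, one_mul]
    rw [MonoidAlgebra.of_apply, MonoidAlgebra.smul_single']
    rw [mul_one]

lemma psiH_of (s₁ s₂ h₁ h₂) (g : Q8) :
    psiH p s₁ s₂ h₁ h₂ (MonoidAlgebra.of ℚ (Gp p) (g, 1)) =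
      algebraMap ℚ B (chiHom s₁ s₂ h₁ h₂ g) := by
  rw [psiH, MonoidAlgebra.lift_of, MonoidHom.coprod_apply]
  simp only [MonoidHom.comp_apply, map_one, mul_one]
  rfl

lemma zval0 : ((0 : ZMod 4)).val = 0 := rfl
lemma zval1 : ((1 : ZMod 4)).val = 1 := rfl
lemma zval2 : ((2 : ZMod 4)).val = 2 := rfl
lemma zval3 : ((3 : ZMod 4)).val = 3 := rfl

lemma psi_sum (s₁ s₂ h₁ h₂) (f : Q8 → B) :
    psiH p s₁ s₂ h₁ h₂ (∑ g : Q8, kapQ p (f g) * MonoidAlgebra.of ℚ (Gp p) (g, 1)) =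
      f (.a 0) + s₁ • f (.a 1) + (s₁ * s₁) • f (.a 2) + (s₁ * s₁ * s₁) • f (.a 3)
      + s₂ • f (.xa 0) + (s₂ * s₁) • f (.xa 1) + (s₂ * (s₁ * s₁)) • f (.xa 2)
      + (s₂ * (s₁ * s₁ * s₁)) • f (.xa 3) := by
  rw [map_sum, sum_univ_Q8]
  simp only [map_mul, psiH_kapQ, psiH_of]
  simp only [chiHom, Q8Hom.hom_a, Q8Hom.hom_xa, zval0, zval1, zval2, zval3]
  simp only [pow_zero, pow_one, pow_succ, map_one, map_mul, mul_one]
  simp only [Algebra.smul_def, map_mul, map_pow]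
  ring

noncomputable def qi : Quaternion B := ⟨0, 1, 0, 0⟩
noncomputable def qj : Quaternion B := ⟨0, 0, 1, 0⟩

lemma qi_sq : qi p * qi p = -1 := by
  ext : 1 <;> simp [Quaternion.re_mul, Quaternion.imI_mul, Quaternion.imJ_mul,
    Quaternion.imK_mul] <;> simp [qi]

lemma qj_sq : qj p * qj p = -1 := by
  ext : 1 <;> simp [Quaternion.re_mul, Quaternion.imI_mul, Quaternion.imJ_mul,
    Quaternion.imK_mul] <;> simp [qj]

lemma qi_pow2 : qi p ^ 2 = -1 := by rw [sq, qi_sq]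
lemma qi_pow3 : qi p ^ 3 = -(qi p) := by
  rw [pow_succ, qi_pow2]
  ext : 1 <;> simp [Quaternion.re_mul, Quaternion.imI_mul, Quaternion.imJ_mul,
    Quaternion.imK_mul] <;> simp [qi]
lemma qi_pow4 : qi p ^ 4 = 1 := by
  rw [show (4 : ℕ) = 2 * 2 from rfl, pow_mul, qi_pow2, sq]
  ext : 1 <;> simp [Quaternion.re_mul, Quaternion.imI_mul, Quaternion.imJ_mul,
    Quaternion.imK_mul]

lemma amap_coe (x : B) : algebraMap B (Quaternion B) x = (x : Quaternion B) := rfl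

lemma qij : qi p * qj p = qj p * qi p ^ 3 := by
  rw [qi_pow3]
  ext : 1 <;> simp [Quaternion.re_mul, Quaternion.imI_mul, Quaternion.imJ_mul,
    Quaternion.imK_mul] <;> simp [qi, qj]

lemma qjj : qj p * qj p = qi p ^ 2 := by rw [qi_pow2, qj_sq]

noncomputable def phi0 : Q8 →* Quaternion B :=
  Q8Hom.hom (qi p) (qj p) (qi_pow4 p) (qij p) (qjj p)

noncomputable def PhiH : MonoidAlgebra ℚ (Gp p) →ₐ[ℚ] Quaternion B :=
  MonoidAlgebra.lift ℚ (Quaternion B) (Gp p)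
    (MonoidHom.noncommCoprod (phi0 p)
      ((algebraMap B (Quaternion B)).toMonoidHom.comp (MonoidAlgebra.of ℚ (Cp p)))
      (fun m n => by
        show Commute (phi0 p m) (algebraMap B (Quaternion B) (MonoidAlgebra.of ℚ (Cp p) n))
        rw [amap_coe]
        exact (Quaternion.coe_commute _ _).symm))

lemma PhiH_kapQ (β : B) : PhiH p (kapQ p β) = (β : Quaternion B) := by
  induction β using MonoidAlgebra.induction_linear with
  | zero => rw [map_zero, map_zero]; exact Quaternion.coe_zero.symm
  | add f g hf hg => rw [map_add, map_add, hf, hg]; rw [← Quaternion.coe_add]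
  | single t r =>
    rw [kapQ_single, PhiH, MonoidAlgebra.lift_single, MonoidHom.noncommCoprod_apply]
    show r • ((phi0 p) 1 * algebraMap B (Quaternion B) (MonoidAlgebra.of ℚ (Cp p) t)) = _
    rw [map_one, one_mul, amap_coe, MonoidAlgebra.of_apply, ← Quaternion.coe_smul,
      MonoidAlgebra.smul_single', mul_one]

lemma PhiH_of (g : Q8) :
    PhiH p (MonoidAlgebra.of ℚ (Gp p) (g, 1)) = phi0 p g := by
  rw [PhiH, MonoidAlgebra.lift_of, MonoidHom.noncommCoprod_apply]
  simp only [MonoidHom.comp_apply, map_one, mul_one]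

lemma Phi_sum (f : Q8 → B) :
    PhiH p (∑ g : Q8, kapQ p (f g) * MonoidAlgebra.of ℚ (Gp p) (g, 1)) =
      (⟨f (.a 0) - f (.a 2), f (.a 1) - f (.a 3), f (.xa 0) - f (.xa 2),
        f (.xa 3) - f (.xa 1)⟩ : Quaternion B) := by
  rw [map_sum, sum_univ_Q8]
  simp only [map_mul, PhiH_kapQ, PhiH_of]
  simp only [phi0, Q8Hom.hom_a, Q8Hom.hom_xa, zval0, zval1, zval2, zval3]
  rw [qi_pow3, qi_pow2]
  simp only [pow_zero, pow_one]
  ext : 1 <;>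
    simp [Quaternion.re_mul, Quaternion.imI_mul, Quaternion.imJ_mul,
      Quaternion.imK_mul, Quaternion.re_coe, Quaternion.imI_coe, Quaternion.imJ_coe,
      Quaternion.imK_coe] <;> simp [qi, qj] <;> ring_nf

noncomputable def ofG (g : Q8) : MonoidAlgebra ℚ (Gp p) := MonoidAlgebra.of ℚ (Gp p) (g, 1)

lemma ofG_eq (g : Q8) : ofG p g = MonoidAlgebra.of ℚ (Gp p) (g, 1) := rfl

lemma ofG_mul (g h : Q8) : ofG p g * ofG p h = ofG p (g * h) := by
  rw [ofG, ofG, ofG, ← map_mul]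
  congr 1
  rw [Prod.mk_mul_mk, one_mul]

lemma ofG_one : ofG p 1 = 1 := by rw [ofG]; exact map_one _

lemma kapQ_comm_of (β : MonoidAlgebra ℚ (Cp p)) (g : Q8) :
    kapQ p β * ofG p g = ofG p g * kapQ p β := by
  induction β using MonoidAlgebra.induction_linear with
  | zero => rw [map_zero, zero_mul, mul_zero]
  | add f g hf hg => rw [map_add, add_mul, mul_add, hf, hg]
  | single t r =>
    rw [kapQ_single, ofG, MonoidAlgebra.of_apply, MonoidAlgebra.single_mul_single,
      MonoidAlgebra.single_mul_single]
    congr 1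
    · rw [Prod.mk_mul_mk, Prod.mk_mul_mk, one_mul, mul_one, one_mul, mul_one]
    · rw [mul_one, one_mul]

lemma hswap (X Y : MonoidAlgebra ℚ (Cp p)) (g h : Q8) :
    kapQ p X * ofG p g * (kapQ p Y * ofG p h) = kapQ p (X * Y) * ofG p (g * h) := by
  calc kapQ p X * ofG p g * (kapQ p Y * ofG p h)
      = kapQ p X * (ofG p g * kapQ p Y * ofG p h) := by
        simp only [mul_assoc]
    _ = kapQ p X * (kapQ p Y * ofG p g * ofG p h) := by rw [← kapQ_comm_of]
    _ = kapQ p X * kapQ p Y * (ofG p g * ofG p h) := by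
        simp only [mul_assoc]
    _ = kapQ p (X * Y) * ofG p (g * h) := by rw [← map_mul, ofG_mul]

lemma zQ_comm (g : Q8) : zQ * g = g * zQ := by revert g; decide

lemma ofG_z_sq : ofG p zQ * ofG p zQ = 1 := by
  rw [ofG_mul, show zQ * zQ = 1 from by decide, ofG_one]

lemma one_add_z_mul_w : (1 + ofG p zQ) * (1 - ofG p zQ) = 0 := by
  rw [add_mul, one_mul, mul_sub, mul_one, ofG_z_sq]
  abel

lemma crossterm (X : MonoidAlgebra ℚ (Cp p)) (g : Q8) :
    kapQ p X * ofG p g * (1 - ofG p zQ) + kapQ p X * ofG p (zQ * g) * (1 - ofG p zQ) = 0 := by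
  have h1 : ofG p (zQ * g) = ofG p g * ofG p zQ := by
    rw [zQ_comm, ← ofG_mul]
  rw [h1, ← mul_assoc, mul_assoc (kapQ p X * ofG p g) (ofG p zQ) (1 - ofG p zQ),
    ← mul_add]
  have h : (1 - ofG p zQ) + ofG p zQ * (1 - ofG p zQ) = 0 := by
    have h := one_add_z_mul_w p
    rw [add_mul, one_mul] at h
    exact h
  rw [h, mul_zero]

lemma form_sq_zero (X Y Z' : MonoidAlgebra ℚ (Cp p))
    (hS : X * X + Y * Y + Z' * Z' = 0) :
    (kapQ p X * ofG p aQ * (1 - ofG p zQ) + kapQ p Y * ofG p bQ * (1 - ofG p zQ)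
      + kapQ p Z' * ofG p cQ * (1 - ofG p zQ)) ^ 2 = 0 := by
  set W := 1 - ofG p zQ with hW
  set P := kapQ p X * ofG p aQ + kapQ p Y * ofG p bQ + kapQ p Z' * ofG p cQ with hP
  have ct : ∀ (T : MonoidAlgebra ℚ (Cp p)) (g : Q8),
      kapQ p T * ofG p g * W + kapQ p T * ofG p (zQ * g) * W = 0 := by
    intro T g
    rw [hW]
    exact crossterm p T g
  have hPW : kapQ p X * ofG p aQ * W + kapQ p Y * ofG p bQ * W + kapQ p Z' * ofG p cQ * W
      = P * W := by rw [hP, add_mul, add_mul]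
  rw [hPW, sq]
  have hcWP : W * P = P * W := by
    have l : ∀ (T : MonoidAlgebra ℚ (Cp p)) (g : Q8),
        ofG p zQ * (kapQ p T * ofG p g) = kapQ p T * ofG p g * ofG p zQ := by
      intro T g
      rw [← mul_assoc, ← kapQ_comm_of, mul_assoc, mul_assoc, ofG_mul, ofG_mul, zQ_comm]
    have hZP : ofG p zQ * P = P * ofG p zQ := by
      rw [hP, mul_add, mul_add, add_mul, add_mul, l, l, l]
    rw [hW, sub_mul, one_mul, mul_sub, mul_one, hZP]
  have hPPW : P * P * W = 0 := by
    have e : P * P * W =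
        (kapQ p (X * X) + kapQ p (Y * Y) + kapQ p (Z' * Z')) * (ofG p zQ * W)
        + (kapQ p (X * Y) * ofG p cQ * W + kapQ p (X * Y) * ofG p (zQ * cQ) * W)
        + (kapQ p (X * Z') * ofG p bQ * W + kapQ p (X * Z') * ofG p (zQ * bQ) * W)
        + (kapQ p (Y * Z') * ofG p aQ * W + kapQ p (Y * Z') * ofG p (zQ * aQ) * W) := by
      rw [hP]
      simp only [add_mul, mul_add, hswap]
      simp only [show aQ * aQ = zQ from by decide, show aQ * bQ = cQ from rfl,
        show bQ * aQ = zQ * cQ from by decide, show aQ * cQ = zQ * bQ from by decide,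
        show cQ * aQ = bQ from by decide, show bQ * bQ = zQ from by decide,
        show bQ * cQ = aQ from by decide, show cQ * bQ = zQ * aQ from by decide,
        show cQ * cQ = zQ from by decide, mul_comm Y X, mul_comm Z' X, mul_comm Z' Y]
      simp only [mul_assoc]
      abel
    rw [e, ct, ct, ct, ← map_add, ← map_add, hS, map_zero, zero_mul]
    simp
  calc P * W * (P * W) = P * (W * P) * W := by simp only [mul_assoc]
    _ = P * (P * W) * W := by rw [hcWP]
    _ = P * P * (W * W) := by simp only [mul_assoc]
    _ = P * P * W + P * P * W := by
        have hWW : W * W = W + W := by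
          rw [hW, sub_mul, one_mul, mul_sub, mul_one, ofG_z_sq]
          abel
        rw [hWW, mul_add]
    _ = 0 := by rw [hPPW, add_zero]

end NQ8

lemma half_zero {M : Type*} [AddCommGroup M] [Module ℚ M] {v : M} (h : v + v = 0) : v = 0 := by
  have h2 : (2 : ℚ) • v = 0 := by rw [two_smul]; exact h
  have h3 := congrArg (fun x => (2⁻¹ : ℚ) • x) h2
  simpa [smul_smul] using h3

lemma quarter_zero {M : Type*} [AddCommGroup M] [Module ℚ M] {v : M}
    (h : v + v + v + v = 0) : v = 0 := by
  refine half_zero (half_zero ?_)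
  rw [show v + v + (v + v) = v + v + v + v from by abel, h]




theorem nilpotent_iff_in_QG
    (p : ℕ) [Fact p.Prime] (hp2 : p ≠ 2)
    (hord : Even (orderOf (2 : ZMod p)))
    (αf : Q8 → MonoidAlgebra ℚ (Cp p)) (α : MonoidAlgebra ℚ (Gp p))
    (hα : α = ∑ g : Q8, kapQ p (αf g) * MonoidAlgebra.of ℚ (Gp p) (g, 1)) :
    (IsNilpotent α ↔
      (α = kapQ p (αf aQ) * MonoidAlgebra.of ℚ (Gp p) (aQ, 1) *
              (1 - MonoidAlgebra.of ℚ (Gp p) (zQ, 1)) +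
           kapQ p (αf bQ) * MonoidAlgebra.of ℚ (Gp p) (bQ, 1) *
              (1 - MonoidAlgebra.of ℚ (Gp p) (zQ, 1)) +
           kapQ p (αf cQ) * MonoidAlgebra.of ℚ (Gp p) (cQ, 1) *
              (1 - MonoidAlgebra.of ℚ (Gp p) (zQ, 1)) ∧
       (αf aQ) ^ 2 + (αf bQ) ^ 2 + (αf cQ) ^ 2 = 0)) ∧
    (IsNilpotent α →
      α ^ 2 = 0 ∧ augm (αf aQ) = 0 ∧ augm (αf bQ) = 0 ∧ augm (αf cQ) = 0) := by
  classical
  haveI : IsReduced (MonoidAlgebra ℚ (Cp p)) := redB p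
  have sqform : ∀ β : MonoidAlgebra ℚ (Gp p),
      β = kapQ p (αf aQ) * MonoidAlgebra.of ℚ (Gp p) (aQ, 1) *
              (1 - MonoidAlgebra.of ℚ (Gp p) (zQ, 1)) +
           kapQ p (αf bQ) * MonoidAlgebra.of ℚ (Gp p) (bQ, 1) *
              (1 - MonoidAlgebra.of ℚ (Gp p) (zQ, 1)) +
           kapQ p (αf cQ) * MonoidAlgebra.of ℚ (Gp p) (cQ, 1) *
              (1 - MonoidAlgebra.of ℚ (Gp p) (zQ, 1)) →
      (αf aQ) ^ 2 + (αf bQ) ^ 2 + (αf cQ) ^ 2 = 0 → β ^ 2 = 0 := by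
    intro β hform hs
    rw [hform]
    have h := NQ8.form_sq_zero p (αf aQ) (αf bQ) (αf cQ) (by linear_combination hs)
    simp only [NQ8.ofG_eq] at h
    exact h
  have fwd : IsNilpotent α →
      (α = kapQ p (αf aQ) * MonoidAlgebra.of ℚ (Gp p) (aQ, 1) *
              (1 - MonoidAlgebra.of ℚ (Gp p) (zQ, 1)) +
           kapQ p (αf bQ) * MonoidAlgebra.of ℚ (Gp p) (bQ, 1) *
              (1 - MonoidAlgebra.of ℚ (Gp p) (zQ, 1)) +
           kapQ p (αf cQ) * MonoidAlgebra.of ℚ (Gp p) (cQ, 1) *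
              (1 - MonoidAlgebra.of ℚ (Gp p) (zQ, 1)) ∧
       (αf aQ) ^ 2 + (αf bQ) ^ 2 + (αf cQ) ^ 2 = 0) := by
    intro hN
    rw [hα] at hN
    have key : ∀ (s₁ s₂ : ℚ) (h₁ : s₁ = 1 ∨ s₁ = -1) (h₂ : s₂ = 1 ∨ s₂ = -1),
        αf (.a 0) + s₁ • αf (.a 1) + (s₁ * s₁) • αf (.a 2) + (s₁ * s₁ * s₁) • αf (.a 3)
        + s₂ • αf (.xa 0) + (s₂ * s₁) • αf (.xa 1) + (s₂ * (s₁ * s₁)) • αf (.xa 2)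
        + (s₂ * (s₁ * s₁ * s₁)) • αf (.xa 3) = 0 := by
      intro s₁ s₂ h₁ h₂
      have h := hN.map (NQ8.psiH p s₁ s₂ h₁ h₂)
      rw [NQ8.psi_sum] at h
      exact h.eq_zero
    have E1 := key 1 1 (Or.inl rfl) (Or.inl rfl)
    have E2 := key 1 (-1) (Or.inl rfl) (Or.inr rfl)
    have E3 := key (-1) 1 (Or.inr rfl) (Or.inl rfl)
    have E4 := key (-1) (-1) (Or.inr rfl) (Or.inr rfl)
    norm_num [one_smul, neg_smul, -QuaternionGroup.a_zero] at E1 E2 E3 E4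
    have hq := hN.map (NQ8.PhiH p)
    rw [NQ8.Phi_sum] at hq
    obtain ⟨hre, him⟩ := quat_nilp hq
    have hre' : αf (.a 0) - αf (.a 2) = 0 := hre
    have him' : (αf (.a 1) - αf (.a 3)) ^ 2 + (αf (.xa 0) - αf (.xa 2)) ^ 2
        + (αf (.xa 3) - αf (.xa 1)) ^ 2 = 0 := him
    have S1 : αf (.a 0) + αf (.a 2) = 0 := quarter_zero (by linear_combination E1 + E2 + E3 + E4)
    have Sa : αf (.a 1) + αf (.a 3) = 0 := quarter_zero (by linear_combination E1 + E2 - E3 - E4)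
    have Sb : αf (.xa 0) + αf (.xa 2) = 0 := quarter_zero (by linear_combination E1 - E2 + E3 - E4)
    have Sc : αf (.xa 1) + αf (.xa 3) = 0 := quarter_zero (by linear_combination E1 - E2 - E3 + E4)
    have hA0 : αf (.a 0) = 0 := half_zero (by linear_combination S1 + hre')
    have hA2 : αf (.a 2) = 0 := half_zero (by linear_combination S1 - hre')
    have haQ : aQ = QuaternionGroup.a 1 := rfl
    have hbQ : bQ = QuaternionGroup.xa 0 := rfl
    have hcQ : cQ = QuaternionGroup.xa 3 := by decide
    have hsum : (αf aQ) ^ 2 + (αf bQ) ^ 2 + (αf cQ) ^ 2 = 0 := by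
      rw [haQ, hbQ, hcQ]
      exact quarter_zero (by
        linear_combination him' + (3 * αf (.a 1) - αf (.a 3)) * Sa
          + (3 * αf (.xa 0) - αf (.xa 2)) * Sb + (3 * αf (.xa 3) - αf (.xa 1)) * Sc)
    refine ⟨?_, hsum⟩
    have e3 : αf (.a 3) = -αf (.a 1) := by linear_combination Sa
    have e2x : αf (.xa 2) = -αf (.xa 0) := by linear_combination Sb
    have e1x : αf (.xa 1) = -αf (.xa 3) := by linear_combination Sc
    rw [hα, NQ8.sum_univ_Q8]
    simp only [← NQ8.ofG_eq]
    simp only [mul_sub, mul_one, mul_assoc, NQ8.ofG_mul]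
    simp only [haQ, hbQ, hcQ,
      show (QuaternionGroup.a 1 : Q8) * QuaternionGroup.a 2 = QuaternionGroup.a 3 from by decide,
      show (QuaternionGroup.xa 0 : Q8) * QuaternionGroup.a 2 = QuaternionGroup.xa 2 from by decide,
      show (QuaternionGroup.xa 3 : Q8) * QuaternionGroup.a 2 = QuaternionGroup.xa 1 from by decide,
      show zQ = QuaternionGroup.a 2 from by decide]
    simp only [hA0, hA2, e3, e2x, e1x, map_zero, zero_mul, map_neg, neg_mul]
    abel
  refine ⟨⟨fwd, ?_⟩, ?_⟩
  · rintro ⟨hform, hs⟩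
    exact ⟨2, sqform α hform hs⟩
  · intro hN
    obtain ⟨hform, hs⟩ := fwd hN
    refine ⟨sqform α hform hs, ?_⟩
    have haug : ∀ β : MonoidAlgebra ℚ (Cp p),
        augm β = MonoidAlgebra.lift ℚ ℚ (Cp p) 1 β := by
      intro β
      rw [MonoidAlgebra.lift_apply, augm]
      refine Finsupp.sum_congr ?_
      intro t _
      simp
    have hE := congrArg (MonoidAlgebra.lift ℚ ℚ (Cp p) 1) hs
    rw [map_add, map_add, map_pow, map_pow, map_pow, map_zero] at hE
    rw [haug, haug, haug]
    refine ⟨?_, ?_, ?_⟩ <;>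
      [ (nlinarith [sq_nonneg ((MonoidAlgebra.lift ℚ ℚ (Cp p) 1) (αf bQ)),
          sq_nonneg ((MonoidAlgebra.lift ℚ ℚ (Cp p) 1) (αf cQ)),
          sq_nonneg ((MonoidAlgebra.lift ℚ ℚ (Cp p) 1) (αf aQ))]);
        (nlinarith [sq_nonneg ((MonoidAlgebra.lift ℚ ℚ (Cp p) 1) (αf bQ)),
          sq_nonneg ((MonoidAlgebra.lift ℚ ℚ (Cp p) 1) (αf cQ)),
          sq_nonneg ((MonoidAlgebra.lift ℚ ℚ (Cp p) 1) (αf aQ))]);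
        (nlinarith [sq_nonneg ((MonoidAlgebra.lift ℚ ℚ (Cp p) 1) (αf bQ)),
          sq_nonneg ((MonoidAlgebra.lift ℚ ℚ (Cp p) 1) (αf cQ)),
          sq_nonneg ((MonoidAlgebra.lift ℚ ℚ (Cp p) 1) (αf aQ))])]
end

section
/- Let p be an odd prime whose multiplicative order of 2 modulo p equals 2m with m odd. If α, β, γ ∈ ℤ[C_p] are *-invariant elements satisfying α² + β² + γ² ≡ 0 (mod 4), then α ≡ β ≡ γ ≡ 0 (mod 2). -/
open MonoidAlgebra

/-- The involution `*` of `ℤ[C_p]`, induced by `g ↦ g⁻¹` on group elements. -/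
def starC (p : ℕ) : MonoidAlgebra ℤ (Cp p) → MonoidAlgebra ℤ (Cp p) :=
  fun x => MonoidAlgebra.ofCoeff (Finsupp.equivMapDomain (Equiv.inv (Cp p)) x.coeff)

section SOSAux

open MonoidAlgebra

variable (p : ℕ)

/-- Reduction mod 2 of the integral group ring. -/
noncomputable def redC : MonoidAlgebra ℤ (Cp p) →+* MonoidAlgebra (ZMod 2) (Cp p) :=
  MonoidAlgebra.liftNCRingHom (MonoidAlgebra.singleOneRingHom.comp (Int.castRingHom (ZMod 2)))
    (MonoidAlgebra.of (ZMod 2) (Cp p)) (fun r g => by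
      show MonoidAlgebra.single 1 ((r : ZMod 2)) * MonoidAlgebra.single g 1 =
        MonoidAlgebra.single g 1 * MonoidAlgebra.single 1 ((r : ZMod 2))
      rw [MonoidAlgebra.single_mul_single, MonoidAlgebra.single_mul_single,
        one_mul, mul_one, one_mul, mul_one])

lemma redC_single (a : Cp p) (b : ℤ) :
    redC p (MonoidAlgebra.single a b) = MonoidAlgebra.single a (b : ZMod 2) := by
  have : redC p (MonoidAlgebra.single a b) =
      MonoidAlgebra.liftNC ((MonoidAlgebra.singleOneRingHom.comp
          (Int.castRingHom (ZMod 2)) : ℤ →+* MonoidAlgebra (ZMod 2) (Cp p)) : ℤ →+ _)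
        (MonoidAlgebra.of (ZMod 2) (Cp p)) (MonoidAlgebra.single a b) := rfl
  rw [this, MonoidAlgebra.liftNC_single]
  show MonoidAlgebra.single 1 ((b : ZMod 2)) * MonoidAlgebra.single a 1 = _
  rw [MonoidAlgebra.single_mul_single, one_mul, mul_one]

lemma redC_apply (x : MonoidAlgebra ℤ (Cp p)) (g : Cp p) :
    (redC p x).coeff g = ((x.coeff g : ℤ) : ZMod 2) := by
  induction x using MonoidAlgebra.induction with
  | zero => simp
  | single_add a b f haf hb ih =>
    rw [map_add, redC_single,
      show ((MonoidAlgebra.single a ((b : ZMod 2)) + redC p f).coeff g)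
        = (MonoidAlgebra.single a ((b : ZMod 2))).coeff g + (redC p f).coeff g from rfl,
      show ((MonoidAlgebra.single a b + f).coeff g) = (MonoidAlgebra.single a b).coeff g + f.coeff g from rfl, ih,
      MonoidAlgebra.coeff_single, MonoidAlgebra.coeff_single, Finsupp.single_apply, Finsupp.single_apply]
    push_cast [apply_ite (fun z : ℤ => (z : ZMod 2))]
    ring

lemma two_mul_apply (x : MonoidAlgebra ℤ (Cp p)) (g : Cp p) :
    (2 * x).coeff g = 2 * x.coeff g := by
  rw [two_mul, MonoidAlgebra.coeff_add, Finsupp.add_apply, two_mul]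

instance charTwoR : CharP (MonoidAlgebra (ZMod 2) (Cp p)) 2 := by
  constructor
  intro n
  rw [MonoidAlgebra.natCast_def]
  rw [show ((MonoidAlgebra.single (1 : Cp p) ((n : ZMod 2)) : MonoidAlgebra (ZMod 2) (Cp p)) = 0)
      ↔ ((n : ZMod 2) = 0) from MonoidAlgebra.single_eq_zero]
  exact ZMod.natCast_eq_zero_iff n 2

lemma twoR_eq_zero : (2 : MonoidAlgebra (ZMod 2) (Cp p)) = 0 := by
  have h := CharP.cast_eq_zero (MonoidAlgebra (ZMod 2) (Cp p)) 2
  exact_mod_cast h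

lemma redC_two : redC p 2 = 0 := by
  have : ((2 : ℤ) : MonoidAlgebra ℤ (Cp p)) = 2 := by norm_num
  rw [show (2 : MonoidAlgebra ℤ (Cp p)) = ((2:ℕ) : MonoidAlgebra ℤ (Cp p)) by norm_num,
    map_natCast]
  rw [show ((2:ℕ) : MonoidAlgebra (ZMod 2) (Cp p)) = 2 by norm_num, twoR_eq_zero]

lemma redC_eq_zero_iff (x : MonoidAlgebra ℤ (Cp p)) :
    redC p x = 0 ↔ ∃ d, x = 2 * d := by
  constructor
  · intro h
    have hdvd : ∀ g : Cp p, 2 ∣ x.coeff g := by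
      intro g
      have h0 : (redC p x).coeff g = 0 := by rw [h]; rfl
      rw [redC_apply] at h0
      have := (ZMod.intCast_zmod_eq_zero_iff_dvd (x.coeff g) 2).mp h0
      exact_mod_cast this
    refine ⟨MonoidAlgebra.ofCoeff (Finsupp.mapRange (fun n => n / 2) (by norm_num) x.coeff), ?_⟩
    refine MonoidAlgebra.ext (Finsupp.ext fun g => ?_)
    rw [two_mul_apply, MonoidAlgebra.coeff_ofCoeff, Finsupp.mapRange_apply]
    exact (Int.mul_ediv_cancel' (hdvd g)).symm
  · rintro ⟨d, rfl⟩
    rw [map_mul, redC_two, zero_mul]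


lemma two_pow_eq_neg_one {p m : ℕ} [Fact p.Prime] (hord : orderOf (2 : ZMod p) = 2 * m)
    (hm : Odd m) : (2 : ZMod p) ^ m = -1 := by
  have hm0 : m ≠ 0 := by rintro rfl; simpa using hm
  have h1 : (2 : ZMod p) ^ (2 * m) = 1 := by rw [← hord]; exact pow_orderOf_eq_one _
  have h2 : ((2 : ZMod p) ^ m) * ((2 : ZMod p) ^ m) = 1 := by
    rw [← pow_add]
    rw [show m + m = 2 * m by ring]
    exact h1
  rcases mul_self_eq_one_iff.mp h2 with h | h
  · exfalso
    have hd := orderOf_dvd_of_pow_eq_one h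
    rw [hord] at hd
    have := Nat.le_of_dvd (Nat.pos_of_ne_zero hm0) hd
    omega
  · exact h

lemma exists_three_k {m : ℕ} (hm : Odd m) : ∃ k, 2 ^ m = 3 * k + 2 := by
  obtain ⟨j, rfl⟩ := hm
  have h3 : (3 : ℕ) ∣ 4 ^ j - 1 := by
    have := Nat.sub_dvd_pow_sub_pow 4 1 j
    simpa using this
  obtain ⟨t, ht⟩ := h3
  have h1 : 1 ≤ 4 ^ j := Nat.one_le_pow _ _ (by norm_num)
  refine ⟨2 * t, ?_⟩
  have hpow : 2 ^ (2 * j + 1) = 2 * 4 ^ j := by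
    have h4 : (4 : ℕ) ^ j = 2 ^ (2 * j) := by
      rw [show (4 : ℕ) = 2 ^ 2 from rfl, ← pow_mul]
    rw [h4, pow_succ, mul_comm]
  have h4j : 4 ^ j = 3 * t + 1 := Nat.eq_add_of_sub_eq h1 ht
  rw [hpow, h4j]
  ring

lemma starred_pow {p : ℕ} (m : ℕ) [Fact p.Prime] (h2m : (2 : ZMod p) ^ m = -1)
    (x : MonoidAlgebra (ZMod 2) (Cp p)) (hx : ∀ g : Cp p, x.coeff g⁻¹ = x.coeff g) :
    x ^ (2 ^ m) = x := by
  haveI : ExpChar (MonoidAlgebra (ZMod 2) (Cp p)) 2 := .prime Nat.prime_two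
  have key : iterateFrobenius (MonoidAlgebra (ZMod 2) (Cp p)) 2 m =
      MonoidAlgebra.mapDomainRingHom (ZMod 2) (invMonoidHom : Cp p →* Cp p) := by
    apply MonoidAlgebra.ringHom_ext
    · intro b
      rw [iterateFrobenius_def, MonoidAlgebra.single_pow, one_pow, ZMod.pow_card_pow]
      simp [Finsupp.mapDomain_single]
    · intro g
      rw [iterateFrobenius_def, MonoidAlgebra.single_pow, one_pow]
      have hg : g ^ (2 ^ m) = g⁻¹ := by
        apply Multiplicative.toAdd.injective
        rw [toAdd_pow]
        rw [nsmul_eq_mul]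
        push_cast
        rw [h2m]
        simp
      rw [hg]
      simp [Finsupp.mapDomain_single]
  have h1 : x ^ 2 ^ m = MonoidAlgebra.mapDomain (fun a : Cp p => a⁻¹) x := by
    rw [← iterateFrobenius_def, key]
    simp [MonoidAlgebra.mapDomainRingHom_apply]
  rw [h1]
  refine MonoidAlgebra.ext (Finsupp.ext fun g => ?_)
  have h2 : (MonoidAlgebra.mapDomain (fun a : Cp p => a⁻¹) x).coeff g = x.coeff g⁻¹ := by
    conv_lhs => rw [← inv_inv g]
    exact Finsupp.mapDomain_apply inv_injective x.coeff g⁻¹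
  rw [h2, hx]

lemma isReducedR {p : ℕ} [Fact p.Prime] (hp2 : p ≠ 2) :
    IsReduced (MonoidAlgebra (ZMod 2) (Cp p)) := by
  haveI : NeZero ((Nat.card (Cp p) : ZMod 2)) := by
    constructor
    have hcard : Nat.card (Cp p) = p := by
      rw [Nat.card_congr Multiplicative.toAdd]
      exact Nat.card_zmod p
    rw [hcard]
    intro h
    rw [ZMod.natCast_eq_zero_iff] at h
    exact hp2 ((Nat.prime_dvd_prime_iff_eq Nat.prime_two Fact.out).mp h).symm
  constructor
  intro x hx
  obtain ⟨e, he, hspan⟩ := IsSemisimpleRing.ideal_eq_span_idempotent (Ideal.span {x})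
  have hxe : x ∈ Ideal.span {e} := hspan ▸ Ideal.subset_span rfl
  obtain ⟨s, hs⟩ := Ideal.mem_span_singleton'.mp hxe
  have hex : e ∈ Ideal.span {x} := hspan ▸ Ideal.mem_span_singleton_self e
  obtain ⟨r, hr⟩ := Ideal.mem_span_singleton'.mp hex
  have hnil : IsNilpotent e := hr ▸ (Commute.all r x).isNilpotent_mul_left hx
  rw [← hs, he.eq_zero_of_isNilpotent hnil, mul_zero]

end SOSAux


theorem star_invariant_sum_of_squares_mod_four
    (p m : ℕ) [Fact p.Prime] (hp2 : p ≠ 2)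
    (hord : orderOf (2 : ZMod p) = 2 * m) (hm : Odd m)
    (α β γ : MonoidAlgebra ℤ (Cp p))
    (hα : starC p α = α) (hβ : starC p β = β) (hγ : starC p γ = γ)
    (hsum : ∃ d : MonoidAlgebra ℤ (Cp p), α ^ 2 + β ^ 2 + γ ^ 2 = 4 * d) :
    (∃ d : MonoidAlgebra ℤ (Cp p), α = 2 * d) ∧
    (∃ d : MonoidAlgebra ℤ (Cp p), β = 2 * d) ∧
    (∃ d : MonoidAlgebra ℤ (Cp p), γ = 2 * d) := by
  classical
  obtain ⟨d, hd⟩ := hsum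
  haveI hred : IsReduced (MonoidAlgebra (ZMod 2) (Cp p)) := isReducedR hp2
  have h2R : (2 : MonoidAlgebra (ZMod 2) (Cp p)) = 0 := twoR_eq_zero p
  have h2m : (2 : ZMod p) ^ m = -1 := two_pow_eq_neg_one hord hm
  obtain ⟨k, hk⟩ := exists_three_k hm
  -- star conditions on coefficients
  have hstar : ∀ x : MonoidAlgebra ℤ (Cp p), starC p x = x → ∀ g : Cp p, x.coeff g⁻¹ = x.coeff g := by
    intro x hx g
    calc x.coeff g⁻¹ = (starC p x).coeff g := by
          rw [starC, MonoidAlgebra.coeff_ofCoeff, Finsupp.equivMapDomain_apply, Equiv.inv_symm, Equiv.inv_apply]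
      _ = x.coeff g := by rw [hx]
  set a := redC p α with ha_def
  set b := redC p β with hb_def
  set c := redC p γ with hc_def
  have hstar2 : ∀ x : MonoidAlgebra ℤ (Cp p), starC p x = x →
      ∀ g : Cp p, (redC p x).coeff g⁻¹ = (redC p x).coeff g := by
    intro x hx g
    rw [redC_apply, redC_apply, hstar x hx g]
  have hpa : a ^ (2 ^ m) = a := starred_pow m h2m a (hstar2 α hα)
  have hpb : b ^ (2 ^ m) = b := starred_pow m h2m b (hstar2 β hβ)
  -- sum of squares is zero mod 2
  have hsum2 : a ^ 2 + b ^ 2 + c ^ 2 = 0 := by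
    have h := congrArg (redC p) hd
    rw [map_add, map_add, map_pow, map_pow, map_pow, map_mul] at h
    rw [show (4 : MonoidAlgebra ℤ (Cp p)) = 2 * 2 by norm_num, map_mul, redC_two,
      zero_mul, zero_mul] at h
    exact h
  -- a + b + c = 0
  have habc : a + b + c = 0 := by
    have hnil : IsNilpotent (a + b + c) := by
      refine ⟨2, ?_⟩
      linear_combination hsum2 + (a * b + a * c + b * c) * h2R
    exact hnil.eq_zero
  -- γ ≡ α + β mod 2
  have habcZ : redC p (α + β + γ) = 0 := by rw [map_add, map_add]; exact habc
  obtain ⟨δ, hδ⟩ := (redC_eq_zero_iff p _).mp habcZ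
  -- α² + αβ + β² ≡ 0 mod 2
  have heq : a ^ 2 + a * b + b ^ 2 = 0 := by
    set w : MonoidAlgebra ℤ (Cp p) := α ^ 2 + α * β + β ^ 2 with hw_def
    set v : MonoidAlgebra ℤ (Cp p) := 2 * (d - δ * δ + α * δ + β * δ) with hv_def
    have hw2 : 2 * w = 2 * v := by
      rw [hw_def, hv_def]
      linear_combination hd + (α + β - γ - 2 * δ) * hδ
    have hwv : w = v := by
      refine MonoidAlgebra.ext (Finsupp.ext fun g => ?_)
      have h := congrArg (fun z : MonoidAlgebra ℤ (Cp p) => z.coeff g) hw2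
      beta_reduce at h
      rw [two_mul_apply, two_mul_apply] at h
      omega
    have h0 : redC p w = 0 := by
      rw [hwv, hv_def, map_mul, redC_two, zero_mul]
    rw [hw_def, map_add, map_add, map_pow, map_pow, map_mul] at h0
    exact h0
  -- the equational endgame in characteristic 2
  have hcube : a ^ 3 = b ^ 3 := by
    linear_combination (a + b) * heq - (a ^ 2 * b + a * b ^ 2 + b ^ 3) * h2R
  have hA : a = a ^ 2 * b ^ (3 * k) := by
    conv_lhs => rw [← hpa, hk]
    rw [pow_add, pow_mul, hcube, ← pow_mul]
    ring
  have hab : a * b ^ 2 = a ^ 2 * b := by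
    calc a * b ^ 2 = (a ^ 2 * b ^ (3 * k)) * b ^ 2 := by rw [← hA]
      _ = a ^ 2 * b ^ (3 * k + 2) := by rw [mul_assoc, ← pow_add]
      _ = a ^ 2 * b ^ (2 ^ m) := by rw [hk]
      _ = a ^ 2 * b := by rw [hpb]
  have ha3 : a ^ 3 = 0 := by
    linear_combination a * heq - hab - (a ^ 2 * b) * h2R
  have haz : a = 0 := (IsNilpotent.eq_zero ⟨3, ha3⟩ : a = 0)
  have hbz : b = 0 := by
    have hb2 : b ^ 2 = 0 := by
      rw [haz] at heq
      simpa using heq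
    exact (IsNilpotent.eq_zero ⟨2, hb2⟩ : b = 0)
  have hcz : c = 0 := by
    rw [haz, hbz] at habc
    simpa using habc
  exact ⟨(redC_eq_zero_iff p α).mp haz, (redC_eq_zero_iff p β).mp hbz,
    (redC_eq_zero_iff p γ).mp hcz⟩
end

section
/- Let p be an odd prime. For every unit w of augmentation 1 in ℤ[C_p], the product N(w) = ∏_{i=1}^{p−1} φ_i(w) equals 1, where φ_i is the ring automorphism of ℤ[C_p] sending t to t^i. -/
open MonoidAlgebra

/-- The ring homomorphism `φᵢ` of `ℤ[C_p]` determined by `t ↦ t^i`. -/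
noncomputable def phiC (p i : ℕ) : MonoidAlgebra ℤ (Cp p) →+* MonoidAlgebra ℤ (Cp p) :=
  MonoidAlgebra.mapDomainRingHom ℤ (powMonoidHom i : Cp p →* Cp p)


section
variable {p : ℕ} [Fact p.Prime]

/-- mult-by-r monoid hom on Cp p -/
def mh (r : ZMod p) : Cp p →* Cp p :=
  AddMonoidHom.toMultiplicative (AddMonoidHom.mulLeft r)

lemma mh_apply (r x : ZMod p) : mh r (Multiplicative.ofAdd x) = Multiplicative.ofAdd (r * x) := rfl

noncomputable def Psi (r : ZMod p) : MonoidAlgebra ℤ (Cp p) →+* MonoidAlgebra ℤ (Cp p) :=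
  MonoidAlgebra.mapDomainRingHom ℤ (mh r)

lemma Psi_apply (r : ZMod p) (f : MonoidAlgebra ℤ (Cp p)) :
    (Psi r f).coeff = Finsupp.mapDomain (mh r) f.coeff := rfl

lemma Psi_Psi (r s : ZMod p) (f : MonoidAlgebra ℤ (Cp p)) :
    Psi r (Psi s f) = Psi (r * s) f := by
  apply MonoidAlgebra.coeff_injective
  simp only [Psi_apply, ← Finsupp.mapDomain_comp]
  congr 1
  funext g
  show mh r (mh s g) = _
  induction g using Multiplicative.rec with
  | _ x => simp [mh_apply, mul_assoc]


lemma phiC_eq_Psi (i : ℕ) (f : MonoidAlgebra ℤ (Cp p)) :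
    phiC p i f = Psi (i : ZMod p) f := by
  apply MonoidAlgebra.coeff_injective
  show Finsupp.mapDomain _ f.coeff = Finsupp.mapDomain _ f.coeff
  congr 1
  funext g
  show g ^ i = mh (i : ZMod p) g
  induction g using Multiplicative.rec with
  | _ x =>
    rw [mh_apply, ← ofAdd_nsmul, nsmul_eq_mul]

end

section
variable {p : ℕ} [Fact p.Prime]


noncomputable def augHom (p : ℕ) : MonoidAlgebra ℤ (Cp p) →+* ℤ :=
  (MonoidAlgebra.lift ℤ ℤ (Cp p) 1).toRingHom

lemma augHom_eq (f : MonoidAlgebra ℤ (Cp p)) : augHom p f = augm f := by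
  show MonoidAlgebra.lift ℤ ℤ (Cp p) 1 f = _
  rw [MonoidAlgebra.lift_apply]
  simp [augm]

lemma augm_mapDomain (g : Cp p → Cp p) (f : MonoidAlgebra ℤ (Cp p)) :
    augm (MonoidAlgebra.mapDomain g f) = augm f := by
  unfold augm
  exact Finsupp.sum_mapDomain_index (fun _ => rfl) (fun _ _ _ => rfl)

lemma augm_Psi (r : ZMod p) (f : MonoidAlgebra ℤ (Cp p)) : augm (Psi r f) = augm f :=
  augm_mapDomain _ f

lemma augm_phiC (i : ℕ) (f : MonoidAlgebra ℤ (Cp p)) : augm (phiC p i f) = augm f :=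
  augm_mapDomain _ f

end

section
variable (p : ℕ) [Fact p.Prime]

noncomputable def sig : MonoidAlgebra ℤ (Cp p) := ∑ g : Cp p, MonoidAlgebra.single g 1

variable {p}

lemma sig_apply (g : Cp p) : (sig p).coeff g = 1 := by
  rw [sig, MonoidAlgebra.coeff_sum, Finset.sum_apply']
  simp only [MonoidAlgebra.coeff_single]
  rw [Finset.sum_eq_single g (fun b _ hb => Finsupp.single_eq_of_ne' hb)
    (fun h => absurd (Finset.mem_univ g) h)]
  simp

lemma single_mul_sig (g : Cp p) : MonoidAlgebra.single g (1:ℤ) * sig p = sig p := by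
  rw [sig, Finset.mul_sum]
  rw [← Equiv.sum_comp (Equiv.mulLeft g) (fun h => MonoidAlgebra.single h (1:ℤ))]
  refine Finset.sum_congr rfl fun h _ => ?_
  rw [MonoidAlgebra.single_mul_single, mul_one]
  rfl

lemma sig_mul_sig : sig p * sig p = (p : ℤ) • sig p := by
  nth_rewrite 1 [sig]
  rw [Finset.sum_mul]
  rw [Finset.sum_congr rfl fun g _ => single_mul_sig g]
  rw [Finset.sum_const, Finset.card_univ]
  simp [Fintype.card_multiplicative, ZMod.card]

lemma augm_sig : augm (sig p) = (p : ℤ) := by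
  rw [← augHom_eq, sig, map_sum]
  have : ∀ g : Cp p, augHom p (MonoidAlgebra.single g 1) = 1 := by
    intro g
    rw [augHom_eq]
    unfold augm
    rw [MonoidAlgebra.coeff_single, Finsupp.sum_single_index] <;> rfl
  rw [Finset.sum_congr rfl fun g _ => this g, Finset.sum_const, Finset.card_univ]
  simp [Fintype.card_multiplicative, ZMod.card]

end

section
variable {p : ℕ} [Fact p.Prime]

lemma mh_injective {x : ZMod p} (hx : x ≠ 0) : Function.Injective (mh x : Cp p → Cp p) := by
  intro a b hab
  have h := congrArg Multiplicative.toAdd hab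
  have : x * a.toAdd = x * b.toAdd := h
  exact Multiplicative.toAdd.injective (mul_left_cancel₀ hx this)

lemma fixed_coeff {X : MonoidAlgebra ℤ (Cp p)}
    (hX : ∀ r : ZMod p, r ≠ 0 → Psi r X = X) {x : ZMod p} (hx : x ≠ 0) :
    X.coeff (Multiplicative.ofAdd x) = X.coeff (Multiplicative.ofAdd (1 : ZMod p)) := by
  have hfix := congrArg MonoidAlgebra.coeff (hX x hx)
  rw [Psi_apply] at hfix
  have h2 := Finsupp.mapDomain_apply (mh_injective hx) X.coeff (Multiplicative.ofAdd (1 : ZMod p))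
  rw [hfix, mh_apply, mul_one] at h2
  exact h2

lemma fixed_decomp {X : MonoidAlgebra ℤ (Cp p)}
    (hX : ∀ r : ZMod p, r ≠ 0 → Psi r X = X) :
    X = (X.coeff 1 - X.coeff (Multiplicative.ofAdd (1 : ZMod p))) • (1 : MonoidAlgebra ℤ (Cp p))
        + X.coeff (Multiplicative.ofAdd (1 : ZMod p)) • sig p := by
  ext g
  rw [MonoidAlgebra.coeff_add, MonoidAlgebra.coeff_smul, MonoidAlgebra.coeff_smul,
    Finsupp.add_apply, Finsupp.smul_apply, Finsupp.smul_apply, sig_apply,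
    MonoidAlgebra.one_def, MonoidAlgebra.coeff_single]
  by_cases hg : g = 1
  · subst hg
    rw [Finsupp.single_eq_same]
    simp
  · rw [Finsupp.single_eq_of_ne' (Ne.symm hg)]
    have hx : Multiplicative.toAdd g ≠ 0 := fun h => hg (Multiplicative.toAdd.injective h)
    have : X.coeff g = X.coeff (Multiplicative.ofAdd (1 : ZMod p)) := fixed_coeff hX hx
    rw [this]
    simp

end

section
variable {p : ℕ} [Fact p.Prime]

lemma prod_reindex {A : Type*} [CommMonoid A] (F : ZMod p → A) :
    ∏ i ∈ Finset.Icc 1 (p - 1), F (i : ZMod p) = ∏ r ∈ Finset.univ.erase (0 : ZMod p), F r := by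
  have hp := (Fact.out : p.Prime)
  refine Finset.prod_nbij' (fun i => (i : ZMod p)) (fun r => r.val) ?_ ?_ ?_ ?_ ?_
  · intro i hi
    rw [Finset.mem_Icc] at hi
    refine Finset.mem_erase.2 ⟨?_, Finset.mem_univ _⟩
    intro h
    rw [ZMod.natCast_eq_zero_iff] at h
    have := Nat.le_of_dvd (by omega) h
    omega
  · intro r hr
    rw [Finset.mem_erase] at hr
    rw [Finset.mem_Icc]
    have h1 : r.val ≠ 0 := fun h => hr.1 (by rwa [← ZMod.val_eq_zero])
    have h2 : r.val < p := ZMod.val_lt r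
    show 1 ≤ r.val ∧ r.val ≤ p - 1
    omega
  · intro i hi
    rw [Finset.mem_Icc] at hi
    show ZMod.val ((i : ZMod p)) = i
    exact ZMod.val_cast_of_lt (by omega)
  · intro r hr
    exact ZMod.natCast_rightInverse r
  · intro i hi
    rfl

lemma prod_mul_reindex {A : Type*} [CommMonoid A] (F : ZMod p → A) {j : ZMod p} (hj : j ≠ 0) :
    ∏ r ∈ Finset.univ.erase (0 : ZMod p), F (j * r) =
      ∏ r ∈ Finset.univ.erase (0 : ZMod p), F r := by
  refine Finset.prod_nbij' (fun r => j * r) (fun r => j⁻¹ * r) ?_ ?_ ?_ ?_ ?_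
  · intro r hr
    rw [Finset.mem_erase] at hr ⊢
    exact ⟨mul_ne_zero hj hr.1, Finset.mem_univ _⟩
  · intro r hr
    rw [Finset.mem_erase] at hr ⊢
    exact ⟨mul_ne_zero (inv_ne_zero hj) hr.1, Finset.mem_univ _⟩
  · intro r _
    show j⁻¹ * (j * r) = r
    rw [← mul_assoc, inv_mul_cancel₀ hj, one_mul]
  · intro r _
    show j * (j⁻¹ * r) = r
    rw [← mul_assoc, mul_inv_cancel₀ hj, one_mul]
  · intro r _
    rfl

lemma ofAdd_one_ne_one : (Multiplicative.ofAdd (1 : ZMod p)) ≠ 1 := by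
  intro h
  have : (1 : ZMod p) = 0 := Multiplicative.ofAdd.injective h
  exact one_ne_zero this

lemma combo_apply_one (α β : ℤ) :
    (α • (1 : MonoidAlgebra ℤ (Cp p)) + β • sig p).coeff 1 = α + β := by
  rw [MonoidAlgebra.coeff_add, MonoidAlgebra.coeff_smul, MonoidAlgebra.coeff_smul,
    Finsupp.add_apply, Finsupp.smul_apply, Finsupp.smul_apply, sig_apply,
    MonoidAlgebra.one_def, MonoidAlgebra.coeff_single, Finsupp.single_eq_same]
  simp

lemma combo_apply_t (α β : ℤ) :
    (α • (1 : MonoidAlgebra ℤ (Cp p)) + β • sig p).coeff (Multiplicative.ofAdd (1 : ZMod p)) = β := by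
  rw [MonoidAlgebra.coeff_add, MonoidAlgebra.coeff_smul, MonoidAlgebra.coeff_smul,
    Finsupp.add_apply, Finsupp.smul_apply, Finsupp.smul_apply, sig_apply,
    MonoidAlgebra.one_def, MonoidAlgebra.coeff_single,
    Finsupp.single_eq_of_ne' (Ne.symm ofAdd_one_ne_one)]
  simp

lemma combo_mul (α β γ δ : ℤ) :
    (α • (1 : MonoidAlgebra ℤ (Cp p)) + β • sig p) * (γ • (1 : MonoidAlgebra ℤ (Cp p)) + δ • sig p)
      = (α * γ) • (1 : MonoidAlgebra ℤ (Cp p)) + (α * δ + β * γ + β * δ * p) • sig p := by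
  rw [mul_add, add_mul, add_mul, smul_mul_smul_comm, smul_mul_smul_comm, smul_mul_smul_comm,
    smul_mul_smul_comm, one_mul, mul_one, one_mul, sig_mul_sig, smul_smul]
  module

end


theorem norm_of_augmentation_one_unit_eq_one
    (p : ℕ) [Fact p.Prime] (hp2 : p ≠ 2)
    (w : (MonoidAlgebra ℤ (Cp p))ˣ)
    (hw : augm (w : MonoidAlgebra ℤ (Cp p)) = 1) :
    ∏ i ∈ Finset.Icc 1 (p - 1), phiC p i (w : MonoidAlgebra ℤ (Cp p)) = 1 := by
  classical
  have hp := (Fact.out : p.Prime)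
  have hrew : ∀ v : MonoidAlgebra ℤ (Cp p),
      ∏ i ∈ Finset.Icc 1 (p - 1), phiC p i v = ∏ r ∈ Finset.univ.erase (0 : ZMod p), Psi r v := by
    intro v
    rw [Finset.prod_congr rfl fun i _ => phiC_eq_Psi i v]
    exact prod_reindex (fun r => Psi r v)
  set N : MonoidAlgebra ℤ (Cp p) := ∏ r ∈ Finset.univ.erase (0 : ZMod p), Psi r (w : MonoidAlgebra ℤ (Cp p)) with hN
  set M : MonoidAlgebra ℤ (Cp p) := ∏ r ∈ Finset.univ.erase (0 : ZMod p), Psi r ((w⁻¹ : (MonoidAlgebra ℤ (Cp p))ˣ) : MonoidAlgebra ℤ (Cp p)) with hM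
  have hfix : ∀ v : MonoidAlgebra ℤ (Cp p), ∀ j : ZMod p, j ≠ 0 →
      Psi j (∏ r ∈ Finset.univ.erase (0 : ZMod p), Psi r v)
        = ∏ r ∈ Finset.univ.erase (0 : ZMod p), Psi r v := by
    intro v j hj
    rw [map_prod, Finset.prod_congr rfl fun r _ => Psi_Psi j r v]
    exact prod_mul_reindex (fun r => Psi r v) hj
  have hNM : N * M = 1 := by
    rw [hN, hM, ← Finset.prod_mul_distrib,
      Finset.prod_congr rfl fun r _ => by rw [← map_mul, Units.mul_inv, map_one],
      Finset.prod_const_one]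
  -- decompositions
  have hdN : N = (N.coeff 1 - N.coeff (Multiplicative.ofAdd (1 : ZMod p))) • (1 : MonoidAlgebra ℤ (Cp p))
      + N.coeff (Multiplicative.ofAdd (1 : ZMod p)) • sig p :=
    fixed_decomp (hfix (w : MonoidAlgebra ℤ (Cp p)))
  have hdM : M = (M.coeff 1 - M.coeff (Multiplicative.ofAdd (1 : ZMod p))) • (1 : MonoidAlgebra ℤ (Cp p))
      + M.coeff (Multiplicative.ofAdd (1 : ZMod p)) • sig p :=
    fixed_decomp (hfix ((w⁻¹ : (MonoidAlgebra ℤ (Cp p))ˣ) : MonoidAlgebra ℤ (Cp p)))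
  set α : ℤ := N.coeff 1 - N.coeff (Multiplicative.ofAdd (1 : ZMod p)) with hα
  set β : ℤ := N.coeff (Multiplicative.ofAdd (1 : ZMod p)) with hβ
  set γ : ℤ := M.coeff 1 - M.coeff (Multiplicative.ofAdd (1 : ZMod p)) with hγ
  set δ : ℤ := M.coeff (Multiplicative.ofAdd (1 : ZMod p)) with hδ
  rw [hdN, hdM, combo_mul] at hNM
  have ht : α * δ + β * γ + β * δ * (p : ℤ) = 0 := by
    have e1 := combo_apply_t (p := p) (α * γ) (α * δ + β * γ + β * δ * (p : ℤ))
    rw [hNM, MonoidAlgebra.one_def, MonoidAlgebra.coeff_single,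
      Finsupp.single_eq_of_ne' (Ne.symm ofAdd_one_ne_one)] at e1
    exact e1.symm
  have h1 : α * γ = 1 := by
    have e2 := combo_apply_one (p := p) (α * γ) (α * δ + β * γ + β * δ * (p : ℤ))
    rw [hNM, MonoidAlgebra.one_def, MonoidAlgebra.coeff_single, Finsupp.single_eq_same] at e2
    linarith
  -- augmentation
  have haug : α + β * p = 1 := by
    have haugN : augHom p N = 1 := by
      rw [hN, map_prod, Finset.prod_congr rfl fun r _ => by rw [augHom_eq, augm_Psi, ← augHom_eq],
        Finset.prod_const, augHom_eq, hw, one_pow]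
    rw [hdN, map_add, map_zsmul, map_zsmul, map_one, augHom_eq, augm_sig] at haugN
    rw [smul_eq_mul, smul_eq_mul, mul_one] at haugN
    linarith
  -- integer arithmetic
  have hα2 : α = 1 ∨ α = -1 := Int.isUnit_iff.mp (IsUnit.of_mul_eq_one (a := α) γ h1)
  have hβ0 : β = 0 := by
    rcases hα2 with h | h
    · have hpz : (p : ℤ) ≠ 0 := Int.natCast_ne_zero.mpr hp.ne_zero
      have : β * (p : ℤ) = 0 := by linarith
      rcases mul_eq_zero.mp this with h' | h'
      · exact h'
      · exact absurd h' hpz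
    · exfalso
      have h2 : (p : ℤ) ∣ 2 := Dvd.intro_left β (by linarith)
      have h3 : p ∣ 2 := by exact_mod_cast h2
      have := (Nat.prime_dvd_prime_iff_eq hp Nat.prime_two).mp h3
      exact hp2 this
  have hα1 : α = 1 := by
    rcases hα2 with h | h
    · exact h
    · rw [hβ0] at haug
      linarith
  rw [hrew]
  show N = 1
  rw [hdN, hα1, hβ0]
  simp
end

section
/- Let p be an odd prime. For every w ∈ 𝒰₂(ℤ[C_p]) = { v ∈ 𝒰₁(ℤ[C_p]) : v ≡ 1 mod (t−1)² }, the half-norm ∏_{i=1}^{(p−1)/2} φ_i(w) equals 1, where φ_i is the ring automorphism of ℤ[C_p] sending t to t^i. -/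
open MonoidAlgebra

/- ============= auxiliary lemmas ============= -/
open Polynomial in
theorem _root_.trivialaux : True := trivial

namespace HNAux

open MonoidAlgebra Polynomial

set_option linter.unusedSectionVars false

section
variable (p : ℕ) [hp : Fact p.Prime]

lemma pow_mod_eq' {R : Type} [Monoid R] {η : R} (h : η ^ p = 1) (m : ℕ) :
    η ^ (m % p) = η ^ m := by
  conv_rhs => rw [← Nat.div_add_mod m p]
  rw [pow_add, pow_mul, h, one_pow, one_mul]

def chi {R : Type} [Monoid R] (η : R) (hη : η ^ p = 1) : Cp p →* R where
  toFun g := η ^ (Multiplicative.toAdd g).val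
  map_one' := by
    haveI : NeZero p := ⟨hp.out.ne_zero⟩
    simp
  map_mul' a b := by
    haveI : NeZero p := ⟨hp.out.ne_zero⟩
    show η ^ (Multiplicative.toAdd (a * b)).val = _
    rw [toAdd_mul, ZMod.val_add, pow_mod_eq' p hη, pow_add]

noncomputable def psi {R : Type} [CommRing R] (η : R) (hη : η ^ p = 1) :
    MonoidAlgebra ℤ (Cp p) →+* R :=
  MonoidAlgebra.liftNCRingHom (Int.castRingHom R) (chi p η hη) (fun _ _ => Commute.all _ _)

lemma psi_single {R : Type} [CommRing R] (η : R) (hη : η ^ p = 1) (g : Cp p) (r : ℤ) :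
    psi p η hη (MonoidAlgebra.single g r) = (r : R) * η ^ (Multiplicative.toAdd g).val := by
  simp [psi, MonoidAlgebra.liftNCRingHom, chi]

lemma psi_congr {R : Type} [CommRing R] {η η' : R} (h : η = η') (hη : η ^ p = 1)
    (hη' : η' ^ p = 1) : psi p η hη = psi p η' hη' := by subst h; rfl

lemma psi_comp {R S : Type} [CommRing R] [CommRing S] (F : R →+* S) (η : R) (hη : η ^ p = 1) :
    F.comp (psi p η hη) = psi p (F η) (by rw [← map_pow, hη, map_one]) := by
  apply MonoidAlgebra.ringHom_ext
  · intro b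
    simp [psi_single]
  · intro a
    simp [psi_single]

lemma phiC_single (i : ℕ) (g : Cp p) (r : ℤ) :
    phiC p i (MonoidAlgebra.single g r) = MonoidAlgebra.single (g ^ i) r := by
  simp [phiC, MonoidAlgebra.mapDomainRingHom, Finsupp.mapDomain_single, powMonoidHom]

lemma psi_comp_phiC {R : Type} [CommRing R] (η : R) (hη : η ^ p = 1) (i : ℕ) :
    (psi p η hη).comp (phiC p i) =
      psi p (η ^ i) (by rw [← pow_mul, mul_comm, pow_mul, hη, one_pow]) := by
  haveI : NeZero p := ⟨hp.out.ne_zero⟩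
  apply MonoidAlgebra.ringHom_ext
  · intro b
    simp [phiC_single, psi_single]
  · intro a
    simp only [RingHom.coe_comp, Function.comp_apply, phiC_single, psi_single,
      Int.cast_one, one_mul]
    rw [← pow_mul]
    have h1 : Multiplicative.toAdd (a ^ i) = (i : ZMod p) * Multiplicative.toAdd a := by
      rw [toAdd_pow]
      ring
    rw [h1, ZMod.val_mul, pow_mod_eq' p hη, ZMod.val_natCast]
    rw [← pow_mod_eq' p hη (i % p * (Multiplicative.toAdd a).val), Nat.mod_mul_mod,
      pow_mod_eq' p hη, mul_comm i]

lemma psi_apply_phiC {R : Type} [CommRing R] (η : R) (hη : η ^ p = 1) (i : ℕ)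
    (hηi : (η ^ i) ^ p = 1) (α : MonoidAlgebra ℤ (Cp p)) :
    psi p η hη (phiC p i α) = psi p (η ^ i) hηi α :=
  RingHom.congr_fun (psi_comp_phiC p η hη i) α

lemma psi_of (R : Type) [CommRing R] (η : R) (hη : η ^ p = 1) :
    psi p η hη (MonoidAlgebra.of ℤ (Cp p) (tC p)) = η := by
  haveI : NeZero p := ⟨hp.out.ne_zero⟩
  rw [MonoidAlgebra.of_apply, psi_single]
  have : (Multiplicative.toAdd (tC p)).val = 1 := by
    have h : Multiplicative.toAdd (tC p) = (1 : ZMod p) := rfl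
    rw [h, ZMod.val_one_eq_one_mod, Nat.mod_eq_of_lt hp.out.one_lt]
  rw [this, pow_one, Int.cast_one, one_mul]

lemma psi_integral {R : Type} [CommRing R] (η : R) (hη : η ^ p = 1)
    (hint : IsIntegral ℤ η) (α : MonoidAlgebra ℤ (Cp p)) :
    IsIntegral ℤ (psi p η hη α) := by
  have : psi p η hη α ∈ integralClosure ℤ R := by
    induction α using MonoidAlgebra.induction_linear with
    | zero => rw [map_zero]; exact Subalgebra.zero_mem _
    | add f g hf hg => rw [map_add]; exact Subalgebra.add_mem _ hf hg
    | single g r =>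
      rw [psi_single]
      exact Subalgebra.mul_mem _ (Subalgebra.intCast_mem _ _)
        (Subalgebra.pow_mem _ hint _)
  exact this

lemma augm_eq_psi (α : MonoidAlgebra ℤ (Cp p)) : augm α = psi p (1 : ℤ) (one_pow p) α := by
  induction α using MonoidAlgebra.induction_linear with
  | zero => simp [augm]
  | add f g hf hg =>
    rw [map_add, ← hf, ← hg]
    unfold augm
    exact Finsupp.sum_add_index (fun _ _ => rfl) (fun _ _ _ _ => rfl)
  | single g r =>
    rw [psi_single, one_pow, mul_one]
    unfold augm
    rw [MonoidAlgebra.coeff_single, Finsupp.sum_single_index rfl, Int.cast_id]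

end
end HNAux
namespace HNAux
open MonoidAlgebra Polynomial
set_option linter.unusedSectionVars false
section
variable (p : ℕ) [hp : Fact p.Prime]

abbrev Pp : ℕ+ := ⟨p, hp.out.pos⟩
abbrev KK : Type := CyclotomicField (Pp p) ℚ

instance kk_cyc : IsCyclotomicExtension {((Pp p : ℕ+) : ℕ)} ℚ (KK p) :=
  CyclotomicField.isCyclotomicExtension _ _

noncomputable def zz : KK p := IsCyclotomicExtension.zeta (Pp p) ℚ (KK p)

lemma zz_prim : IsPrimitiveRoot (zz p) p :=
  IsCyclotomicExtension.zeta_spec (Pp p) ℚ (KK p)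

lemma zz_pow : (zz p) ^ p = 1 := (zz_prim p).pow_eq_one

lemma zz_int : IsIntegral ℤ (zz p) := by
  refine ⟨Polynomial.X ^ p - 1, ?_, ?_⟩
  · simpa using Polynomial.monic_X_pow_sub_C (1 : ℤ) hp.out.ne_zero
  · simp [Polynomial.eval₂_sub, zz_pow]

lemma irr_cyc : Irreducible (Polynomial.cyclotomic p ℚ) :=
  Polynomial.cyclotomic.irreducible_rat hp.out.pos

lemma minpoly_zz : Polynomial.cyclotomic p ℚ = minpoly ℚ (zz p) :=
  Polynomial.cyclotomic_eq_minpoly_rat (zz_prim p) hp.out.pos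

/-- polynomial attached to a group-ring element -/
noncomputable def pol (α : MonoidAlgebra ℤ (Cp p)) : Polynomial ℚ :=
  ∑ j ∈ Finset.range p, Polynomial.C ((α.coeff (Multiplicative.ofAdd ((j : ℕ) : ZMod p)) : ℤ) : ℚ)
    * Polynomial.X ^ j

lemma pol_add (α β : MonoidAlgebra ℤ (Cp p)) : pol p (α + β) = pol p α + pol p β := by
  unfold pol
  rw [← Finset.sum_add_distrib]
  refine Finset.sum_congr rfl fun j _ => ?_
  have : (α + β).coeff (Multiplicative.ofAdd ((j : ℕ) : ZMod p))
      = α.coeff (Multiplicative.ofAdd ((j : ℕ) : ZMod p)) + β.coeff (Multiplicative.ofAdd ((j : ℕ) : ZMod p)) :=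
    rfl
  rw [this]
  rw [Int.cast_add, Polynomial.C_add, add_mul]

lemma pol_single (g : Cp p) (r : ℤ) :
    pol p (MonoidAlgebra.single g r)
      = Polynomial.C (r : ℚ) * Polynomial.X ^ (Multiplicative.toAdd g).val := by
  haveI : NeZero p := ⟨hp.out.ne_zero⟩
  unfold pol
  rw [Finset.sum_eq_single (Multiplicative.toAdd g).val]
  · congr 2
    have : Multiplicative.ofAdd ((((Multiplicative.toAdd g).val : ℕ) : ZMod p))
        = g := by
      rw [ZMod.natCast_val, ZMod.cast_id]
      rfl
    rw [this, MonoidAlgebra.coeff_single, Finsupp.single_eq_same]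
  · intro j hj hne
    have : (MonoidAlgebra.single g r).coeff (Multiplicative.ofAdd ((j : ℕ) : ZMod p)) = 0 := by
      rw [MonoidAlgebra.coeff_single, Finsupp.single_apply_eq_zero]
      intro h
      exfalso
      apply hne
      rw [← h]
      symm
      show (Multiplicative.toAdd (Multiplicative.ofAdd ((j:ℕ) : ZMod p))).val = j
      rw [toAdd_ofAdd, ZMod.val_natCast, Nat.mod_eq_of_lt (Finset.mem_range.mp hj)]
    rw [this]
    simp
  · intro h
    exfalso
    exact h (Finset.mem_range.mpr (ZMod.val_lt _))

lemma pol_aeval {R : Type} [CommRing R] [Algebra ℚ R] (η : R) (hη : η ^ p = 1)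
    (α : MonoidAlgebra ℤ (Cp p)) :
    Polynomial.aeval η (pol p α) = psi p η hη α := by
  induction α using MonoidAlgebra.induction_linear with
  | zero =>
    have : pol p (0 : MonoidAlgebra ℤ (Cp p)) = 0 := by
      unfold pol; simp
    rw [this, map_zero, map_zero]
  | add f g hf hg => rw [pol_add, map_add, map_add, hf, hg]
  | single g r =>
    rw [pol_single, map_mul, map_pow, Polynomial.aeval_C, Polynomial.aeval_X, psi_single,
      map_intCast]

lemma pol_coeff (α : MonoidAlgebra ℤ (Cp p)) (j : ℕ) (hj : j < p) :
    (pol p α).coeff j = ((α.coeff (Multiplicative.ofAdd ((j : ℕ) : ZMod p)) : ℤ) : ℚ) := by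
  unfold pol
  rw [Polynomial.finset_sum_coeff]
  simp only [Polynomial.coeff_C_mul, Polynomial.coeff_X_pow]
  rw [Finset.sum_eq_single j]
  · simp
  · intro k hk hne
    simp [Ne.symm hne]
  · intro h
    exact absurd (Finset.mem_range.mpr hj) h

lemma pol_degree (α : MonoidAlgebra ℤ (Cp p)) : (pol p α).degree < (p : ℕ) := by
  unfold pol
  apply lt_of_le_of_lt (Polynomial.degree_sum_le _ _)
  rw [Finset.sup_lt_iff (by exact WithBot.bot_lt_coe (p : ℕ))]
  intro j hj
  refine lt_of_le_of_lt (Polynomial.degree_C_mul_X_pow_le _ _) ?_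
  exact_mod_cast Finset.mem_range.mp hj

lemma psi_inj (α : MonoidAlgebra ℤ (Cp p)) (h0 : psi p (1 : ℤ) (one_pow p) α = 0)
    (h1 : psi p (zz p) (zz_pow p) α = 0) : α = 0 := by
  haveI : NeZero p := ⟨hp.out.ne_zero⟩
  have hP : pol p α = 0 := by
    have hd1 : (X - Polynomial.C (1 : ℚ)) ∣ pol p α := by
      rw [Polynomial.dvd_iff_isRoot]
      have hcast : psi p ((1 : ℚ)) (one_pow p) α = ((psi p (1 : ℤ) (one_pow p) α : ℤ) : ℚ) := by
        have h2 := RingHom.congr_fun (psi_comp p (Int.castRingHom ℚ) (1 : ℤ) (one_pow p)) α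
        simpa using h2.symm
      have h3 : Polynomial.aeval (1 : ℚ) (pol p α) = 0 := by
        rw [pol_aeval p (1 : ℚ) (one_pow p) α, hcast, h0, Int.cast_zero]
      simpa using h3
    have hd2 : Polynomial.cyclotomic p ℚ ∣ pol p α := by
      rw [minpoly_zz p]
      exact minpoly.dvd ℚ (zz p) (by rw [pol_aeval p (zz p) (zz_pow p) α, h1])
    have hcop : IsCoprime (X - Polynomial.C (1 : ℚ)) (Polynomial.cyclotomic p ℚ) := by
      rw [Irreducible.coprime_iff_not_dvd (Polynomial.irreducible_X_sub_C 1)]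
      intro hdvd
      have h4 := Polynomial.dvd_iff_isRoot.mp hdvd
      rw [Polynomial.IsRoot, Polynomial.eval_one_cyclotomic_prime] at h4
      have : (p : ℚ) ≠ 0 := by exact_mod_cast hp.out.ne_zero
      exact this h4
    have hdeg : ((X - Polynomial.C (1 : ℚ)) * Polynomial.cyclotomic p ℚ).degree
        = ((p : ℕ) : WithBot ℕ) := by
      rw [Polynomial.degree_mul, Polynomial.degree_X_sub_C, Polynomial.degree_cyclotomic,
        Nat.totient_prime hp.out]
      have h1 : (1 : ℕ) + (p - 1) = p := by
        have := hp.out.one_lt; omega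
      exact_mod_cast congrArg (Nat.cast : ℕ → WithBot ℕ) h1
    refine Polynomial.eq_zero_of_dvd_of_degree_lt (hcop.mul_dvd hd1 hd2) ?_
    rw [hdeg]
    exact pol_degree p α
  have hc : ∀ g : Cp p, α.coeff g = 0 := by
    intro g
    have h5 := pol_coeff p α (Multiplicative.toAdd g).val (ZMod.val_lt _)
    rw [hP, Polynomial.coeff_zero] at h5
    have h6 : α.coeff (Multiplicative.ofAdd ((((Multiplicative.toAdd g).val : ℕ) : ZMod p))) = 0 := by
      exact_mod_cast h5.symm
    rw [ZMod.natCast_val, ZMod.cast_id] at h6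
    exact h6
  exact MonoidAlgebra.coeff_eq_zero.mp (Finsupp.ext hc)

end
end HNAux
namespace HNAux
open MonoidAlgebra Polynomial
set_option linter.unusedSectionVars false
section
variable (p : ℕ) [hp : Fact p.Prime]

lemma hP2 (hp2 : p ≠ 2) : Pp p ≠ 2 := by
  intro h
  exact hp2 (by simpa using congrArg (fun x : ℕ+ => (x : ℕ)) h)

lemma norm_int (z : KK p) (hz : IsIntegral ℤ z) :
    ∃ m : ℤ, (m : ℚ) = Algebra.norm ℚ z := by
  haveI : NumberField (KK p) := IsCyclotomicExtension.numberField {(Pp p : ℕ)} ℚ (KK p)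
  exact IsIntegrallyClosed.isIntegral_iff.mp (Algebra.isIntegral_norm (K := ℚ) hz)

lemma sum_pow_int (z : KK p) (hz : IsIntegral ℤ z) (k : ℕ) :
    IsIntegral ℤ (∑ i ∈ Finset.range k, z ^ i) := by
  have : (∑ i ∈ Finset.range k, z ^ i) ∈ integralClosure ℤ (KK p) :=
    Subalgebra.sum_mem _ (fun i _ => Subalgebra.pow_mem _ hz i)
  exact this

lemma norm_prim_sub_one (hp2 : p ≠ 2) (y : KK p) (hy : IsPrimitiveRoot y p) :
    Algebra.norm ℚ (y - 1) = (p : ℚ) := by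
  haveI : Fact (Nat.Prime ((Pp p : ℕ+) : ℕ)) := hp
  have hy' : IsPrimitiveRoot y ((Pp p : ℕ+) : ℕ) := hy
  have h := IsPrimitiveRoot.norm_sub_one_of_prime_ne_two' (p := Pp p) (K := ℚ)
    hy' (irr_cyc p) (by exact hp2)
  simpa using h

lemma norm_lam (hp2 : p ≠ 2) : Algebra.norm ℚ (zz p - 1) = (p : ℚ) :=
  norm_prim_sub_one p hp2 (zz p) (zz_prim p)

lemma root_eq_one (hp2 : p ≠ 2) (x : KK p) (hx : IsIntegral ℤ x) (n : ℕ) (hn : 0 < n)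
    (hxn : x ^ n = 1) (c : KK p) (hc : IsIntegral ℤ c)
    (hcong : x - 1 = (zz p - 1) ^ 2 * c) : x = 1 := by
  haveI : NumberField (KK p) := IsCyclotomicExtension.numberField {(Pp p : ℕ)} ℚ (KK p)
  by_contra hx1
  have hfin : IsOfFinOrder x := isOfFinOrder_iff_pow_eq_one.mpr ⟨n, hn, hxn⟩
  obtain ⟨N, hNdef⟩ : ∃ N, orderOf x = N := ⟨_, rfl⟩
  have hNpos : 0 < N := hNdef ▸ hfin.orderOf_pos
  have hN1 : N ≠ 1 := fun h => hx1 (orderOf_eq_one_iff.mp (hNdef.trans h))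
  obtain ⟨q, hqdef⟩ : ∃ q, q = N.minFac := ⟨_, rfl⟩
  have hq : q.Prime := hqdef ▸ Nat.minFac_prime hN1
  have hqd : q ∣ N := hqdef ▸ Nat.minFac_dvd N
  obtain ⟨y, hy⟩ : ∃ y, y = x ^ (N / q) := ⟨_, rfl⟩
  have hyq : y ^ q = 1 := by
    rw [hy, ← pow_mul, Nat.div_mul_cancel hqd, ← hNdef, pow_orderOf_eq_one]
  have hy1 : y ≠ 1 := by
    intro h
    have hxNq : x ^ (N / q) = 1 := by rw [← hy]; exact h
    have hdvd : N ∣ N / q := by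
      have h2 := orderOf_dvd_of_pow_eq_one hxNq
      rwa [hNdef] at h2
    have hlt : N / q < N := Nat.div_lt_self hNpos hq.one_lt
    have hpos' : 0 < N / q := Nat.div_pos (hqdef ▸ Nat.minFac_le hNpos) hq.pos
    exact absurd (Nat.le_of_dvd hpos' hdvd) (not_le.mpr hlt)
  have hyint : IsIntegral ℤ y := hy ▸ hx.pow _
  obtain ⟨lam, hlam⟩ : ∃ l, l = zz p - 1 := ⟨_, rfl⟩
  rw [← hlam] at hcong
  -- 1 - y = lam^2 * c2 with c2 integral
  obtain ⟨S, hS⟩ : ∃ P, P = ∑ i ∈ Finset.range (N / q), x ^ i := ⟨_, rfl⟩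
  have hSint : IsIntegral ℤ S := hS ▸ sum_pow_int p x hx _
  have hymo : 1 - y = lam ^ 2 * (-(c * S)) := by
    have h7 : y - 1 = (x - 1) * S := by rw [hy, hS, mul_comm, geom_sum_mul]
    have : 1 - y = -( (x-1) * S ) := by rw [← h7]; ring
    rw [this, hcong]; ring
  have hc2int : IsIntegral ℤ (-(c * S)) := (hc.mul hSint).neg
  -- q = (1 - y) * C
  have hSq : (∑ j ∈ Finset.range q, y ^ j) = 0 := by
    have h5 := geom_sum_mul y q
    rw [hyq, sub_self] at h5
    rcases mul_eq_zero.mp h5 with h | h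
    · exact h
    · exact absurd (sub_eq_zero.mp h) hy1
  obtain ⟨C, hC⟩ : ∃ c', c' = ∑ j ∈ Finset.range q, ∑ i ∈ Finset.range j, y ^ i := ⟨_, rfl⟩
  have hCint : IsIntegral ℤ C := by
    have hmem : (∑ j ∈ Finset.range q, ∑ i ∈ Finset.range j, y ^ i)
        ∈ integralClosure ℤ (KK p) :=
      Subalgebra.sum_mem _ (fun j _ => Subalgebra.sum_mem _
        (fun i _ => Subalgebra.pow_mem _ hyint i))
    rw [hC]
    exact hmem
  have hqfact : (q : KK p) = (1 - y) * C := by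
    have h6 : (q : KK p) = ∑ j ∈ Finset.range q, (1 - y ^ j) := by
      rw [Finset.sum_sub_distrib, hSq, sub_zero, Finset.sum_const, Finset.card_range]
      simp
    rw [h6, hC, Finset.mul_sum]
    refine Finset.sum_congr rfl fun j _ => ?_
    linear_combination geom_sum_mul y j
  -- norms
  obtain ⟨m2, hm2⟩ := norm_int p _ hc2int
  obtain ⟨m3, hm3⟩ := norm_int p C hCint
  obtain ⟨d, hd⟩ : ∃ d, d = Module.finrank ℚ (KK p) := ⟨_, rfl⟩
  have e1 : Algebra.norm ℚ (1 - y) = (p : ℚ) ^ 2 * m2 := by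
    rw [hymo, hlam, map_mul, map_pow, norm_lam p hp2, hm2]
  have e2 : Algebra.norm ℚ (1 - y) * m3 = (q : ℚ) ^ d := by
    rw [hm3, ← map_mul, ← hqfact]
    rw [show ((q : ℕ) : KK p) = algebraMap ℚ (KK p) (q : ℚ) by push_cast; rfl]
    rw [Algebra.norm_algebraMap, hd]
  have e3 : (p : ℤ) ^ 2 * (m2 * m3) = (q : ℤ) ^ d := by
    have : (p : ℚ) ^ 2 * (m2 * m3) = (q : ℚ) ^ d := by
      rw [← e2, e1]; ring
    exact_mod_cast this
  -- p = q
  have hpq : p = q := by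
    have hdvd : (p : ℤ) ∣ (q : ℤ) ^ d := ⟨p * (m2 * m3), by rw [← e3]; ring⟩
    have hdvd2 : p ∣ q ^ d := by exact_mod_cast hdvd
    exact (Nat.prime_dvd_prime_iff_eq hp.out hq).mp (hp.out.dvd_of_dvd_pow hdvd2)
  -- y is a primitive p-th root of unity
  have hyp : y ^ p = 1 := by rw [← hpq] at hyq; exact hyq
  have horder : orderOf y = p := by
    have h8 : orderOf y ∣ p := orderOf_dvd_of_pow_eq_one hyp
    rcases hp.out.eq_one_or_self_of_dvd _ h8 with h | h
    · exact absurd (orderOf_eq_one_iff.mp h) hy1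
    · exact h
  have hyprim : IsPrimitiveRoot y p :=
    ⟨hyp, fun l hl => by rw [← horder]; exact orderOf_dvd_of_pow_eq_one hl⟩
  have hny : Algebra.norm ℚ (y - 1) = (p : ℚ) := norm_prim_sub_one p hp2 y hyprim
  -- contradiction
  obtain ⟨u, hu⟩ : ∃ u, u = Algebra.norm ℚ (-1 : KK p) := ⟨_, rfl⟩
  have hu2 : u * u = 1 := by rw [hu, ← map_mul]; simp
  have hp0 : (p : ℚ) ≠ 0 := by exact_mod_cast hp.out.ne_zero
  have e4 : Algebra.norm ℚ (1 - y) = u * (p : ℚ) := by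
    rw [show (1 : KK p) - y = -1 * (y - 1) by ring, map_mul, hny, hu]
  have e5 : u * (p : ℚ) = (p : ℚ) ^ 2 * m2 := by rw [← e4, e1]
  rcases mul_self_eq_one_iff.mp hu2 with h | h
  · have h13 : (p : ℚ) * 1 = (p : ℚ) * ((p : ℚ) * m2) := by
      rw [h] at e5; linear_combination e5
    have h14 : (1 : ℚ) = (p : ℚ) * m2 := mul_left_cancel₀ hp0 h13
    have h15 : (1 : ℤ) = (p : ℤ) * m2 := by exact_mod_cast h14
    have h16 : (p : ℤ) ∣ 1 := ⟨m2, h15⟩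
    have h17 : p ∣ 1 := by exact_mod_cast h16
    have h18 : p = 1 := Nat.dvd_one.mp h17
    have := hp.out.one_lt
    omega
  · have h13 : (p : ℚ) * (-1) = (p : ℚ) * ((p : ℚ) * m2) := by
      rw [h] at e5; linear_combination e5
    have h14 : (-1 : ℚ) = (p : ℚ) * m2 := mul_left_cancel₀ hp0 h13
    have h15 : (-1 : ℤ) = (p : ℤ) * m2 := by exact_mod_cast h14
    have h16 : (p : ℤ) ∣ 1 := (dvd_neg.mp ⟨m2, h15⟩ : (p:ℤ) ∣ 1)
    have h17 : p ∣ 1 := by exact_mod_cast h16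
    have h18 : p = 1 := Nat.dvd_one.mp h17
    have := hp.out.one_lt
    omega

end
end HNAux
namespace HNAux
open MonoidAlgebra Polynomial
set_option linter.unusedSectionVars false
section
variable (p : ℕ) [hp : Fact p.Prime]

lemma psi_apply_congr {R : Type} [CommRing R] {η η' : R} (h : η = η') (hη : η ^ p = 1)
    (hη' : η' ^ p = 1) (α : MonoidAlgebra ℤ (Cp p)) : psi p η hη α = psi p η' hη' α := by
  subst h; rfl

lemma prod_psi_eq_norm (hpow : ∀ i : ℕ, ((zz p) ^ i) ^ p = 1) (α : MonoidAlgebra ℤ (Cp p)) :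
    ∏ i ∈ Finset.Ioc 0 (p - 1), psi p ((zz p) ^ i) (hpow i) α
      = algebraMap ℚ (KK p) (Algebra.norm ℚ (psi p (zz p) (zz_pow p) α)) := by
  haveI : NeZero p := ⟨hp.out.ne_zero⟩
  haveI := IsCyclotomicExtension.isGalois (S := {(Pp p : ℕ)}) (K := ℚ) (L := KK p)
  haveI : NumberField (KK p) := IsCyclotomicExtension.numberField {(Pp p : ℕ)} ℚ (KK p)
  rw [Algebra.norm_eq_prod_automorphisms]
  have hσpow : ∀ σ : KK p ≃ₐ[ℚ] KK p, (σ (zz p)) ^ p = 1 := fun σ => by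
    rw [← map_pow, zz_pow, map_one]
  have hstep : ∀ σ : KK p ≃ₐ[ℚ] KK p,
      σ (psi p (zz p) (zz_pow p) α) = psi p (σ (zz p)) (hσpow σ) α := fun σ =>
    RingHom.congr_fun (psi_comp p (σ : KK p →+* KK p) (zz p) (zz_pow p)) α
  set e := IsCyclotomicExtension.autEquivPow (n := Pp p) (KK p) (irr_cyc p) with he
  symm
  calc ∏ σ : KK p ≃ₐ[ℚ] KK p, σ (psi p (zz p) (zz_pow p) α)
      = ∏ u : (ZMod p)ˣ, (e.symm u) (psi p (zz p) (zz_pow p) α) :=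
        (Equiv.prod_comp e.symm.toEquiv (fun σ => σ (psi p (zz p) (zz_pow p) α))).symm
    _ = ∏ u : (ZMod p)ˣ, psi p ((zz p) ^ ((u : ZMod p)).val)
          (hpow ((u : ZMod p)).val) α := by
        refine Finset.prod_congr rfl fun u _ => ?_
        rw [hstep (e.symm u)]
        refine psi_apply_congr p ?_ _ _ α
        have h2 := (IsCyclotomicExtension.zeta_spec (Pp p) ℚ (KK p)).autToPow_spec ℚ (e.symm u)
        have h3 : (IsCyclotomicExtension.zeta_spec (Pp p) ℚ (KK p)).autToPow ℚ (e.symm u)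
            = e (e.symm u) := rfl
        rw [h3] at h2
        exact h2.symm.trans (congrArg (fun x : (ZMod p)ˣ => zz p ^ (x : ZMod p).val)
          (e.apply_symm_apply u))
    _ = ∏ i ∈ Finset.Ioc 0 (p - 1), psi p ((zz p) ^ i) (hpow i) α := by
        refine Finset.prod_bij' (fun u _ => ((u : ZMod p)).val)
          (fun n hn => Units.mk0 ((n : ℕ) : ZMod p) ?_) ?_ ?_ ?_ ?_ ?_
        · intro hzero
          rw [ZMod.natCast_eq_zero_iff] at hzero
          rw [Finset.mem_Ioc] at hn
          have := Nat.le_of_dvd hn.1 hzero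
          have := hp.out.one_lt
          omega
        · intro u _
          have h5 := ZMod.val_lt (u : ZMod p)
          have h6 := hp.out.one_lt
          have h7 : ((u : ZMod p)).val ≠ 0 := fun h =>
            Units.ne_zero u ((ZMod.val_eq_zero _).mp h)
          simp only [Finset.mem_Ioc]
          refine ⟨?_, ?_⟩
          · show 0 < ((u : ZMod p)).val
            omega
          · show ((u : ZMod p)).val ≤ p - 1
            omega
        · intro n hn
          exact Finset.mem_univ _
        · intro u _
          apply Units.ext
          simp only [Units.val_mk0]
          rw [ZMod.natCast_val, ZMod.cast_id]
        · intro n hn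
          simp only [Units.val_mk0]
          rw [Finset.mem_Ioc] at hn
          have := hp.out.one_lt
          exact ZMod.val_cast_of_lt (by omega)
        · intro u _
          rfl

end
end HNAux

set_option maxHeartbeats 2000000 in
open HNAux in
theorem half_norm_of_U2_unit_eq_one
    (p : ℕ) [Fact p.Prime] (hp2 : p ≠ 2)
    (w : (MonoidAlgebra ℤ (Cp p))ˣ)
    (hw : augm (w : MonoidAlgebra ℤ (Cp p)) = 1)
    (hw2 : (w : MonoidAlgebra ℤ (Cp p)) - 1 ∈
        Ideal.span {(MonoidAlgebra.of ℤ (Cp p) (tC p) - 1) ^ 2}) :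
    ∏ i ∈ Finset.Icc 1 ((p - 1) / 2), phiC p i (w : MonoidAlgebra ℤ (Cp p)) = 1 := by
  classical
  have hpp : p.Prime := Fact.out
  haveI : NeZero p := ⟨hpp.ne_zero⟩
  have hps : p = 2 * ((p - 1) / 2) + 1 := by
    obtain ⟨k, hk⟩ := hpp.odd_of_ne_two hp2
    omega
  have hζp := HNAux.zz_pow p
  have hpow : ∀ i : ℕ, ((HNAux.zz p) ^ i) ^ p = 1 := fun i => by
    rw [← pow_mul, mul_comm, pow_mul, HNAux.zz_pow, one_pow]
  have hpow2 : ∀ a b : ℕ, (((HNAux.zz p) ^ a) ^ b) ^ p = 1 := fun a b => by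
    rw [← pow_mul, ← pow_mul, show a * (b * p) = p * (a * b) by ring, pow_mul,
      HNAux.zz_pow, one_pow]
  set v := ∏ i ∈ Finset.Icc 1 ((p - 1) / 2), phiC p i (w : MonoidAlgebra ℤ (Cp p)) with hv
  -- augmentation of v is 1
  have hax : ∀ i : ℕ, HNAux.psi p (1 : ℤ) (one_pow p) (phiC p i ↑w) = 1 := fun i => by
    rw [HNAux.psi_apply_phiC p (1 : ℤ) (one_pow p) i (by rw [one_pow, one_pow]) ↑w,
      HNAux.psi_apply_congr p (one_pow i) _ (one_pow p) (↑w : MonoidAlgebra ℤ (Cp p)),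
      ← HNAux.augm_eq_psi p ↑w]
    exact hw
  have hA : HNAux.psi p (1 : ℤ) (one_pow p) v = 1 := by
    rw [hv, map_prod, Finset.prod_congr rfl (fun i _ => hax i)]
    exact Finset.prod_const_one
  -- x = psi ζ v as a product
  have hxprod : HNAux.psi p (HNAux.zz p) hζp v
      = ∏ i ∈ Finset.Icc 1 ((p - 1) / 2), HNAux.psi p ((HNAux.zz p) ^ i) (hpow i) ↑w := by
    rw [hv, map_prod]
    exact Finset.prod_congr rfl fun i _ => HNAux.psi_apply_phiC p _ _ i (hpow i) ↑w
  obtain ⟨r, hr⟩ : ((MonoidAlgebra.of ℤ (Cp p) (tC p) - 1) ^ 2) ∣ ((↑w : MonoidAlgebra ℤ (Cp p)) - 1) :=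
    Ideal.mem_span_singleton.mp hw2
  -- congruence : x = 1 + (ζ-1)^2 * c
  obtain ⟨c, hcint, hcongx⟩ : ∃ c, IsIntegral ℤ c ∧ HNAux.psi p (HNAux.zz p) hζp v
      = 1 + (HNAux.zz p - 1) ^ 2 * c := by
    rw [hxprod]
    refine Finset.prod_induction _
      (fun z => ∃ c, IsIntegral ℤ c ∧ z = 1 + (HNAux.zz p - 1) ^ 2 * c)
      ?_ ⟨0, isIntegral_zero, by ring⟩ ?_
    · rintro a b ⟨ca, hca, hae⟩ ⟨cb, hcb, hbe⟩
      refine ⟨ca + cb + (HNAux.zz p - 1) ^ 2 * (ca * cb), ?_, ?_⟩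
      · have hlam2 : IsIntegral ℤ ((HNAux.zz p - 1) ^ 2) :=
          ((HNAux.zz_int p).sub isIntegral_one).pow 2
        exact (hca.add hcb).add (hlam2.mul (hca.mul hcb))
      · rw [hae, hbe]; ring
    · intro i _
      have h8 : HNAux.psi p ((HNAux.zz p) ^ i) (hpow i) ↑w
          = 1 + ((HNAux.zz p) ^ i - 1) ^ 2 * HNAux.psi p ((HNAux.zz p) ^ i) (hpow i) r := by
        have h9 : HNAux.psi p ((HNAux.zz p) ^ i) (hpow i) ((↑w : MonoidAlgebra ℤ (Cp p)) - 1)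
            = ((HNAux.zz p) ^ i - 1) ^ 2 * HNAux.psi p ((HNAux.zz p) ^ i) (hpow i) r := by
          rw [hr, map_mul, map_pow, map_sub, map_one, HNAux.psi_of]
        rw [map_sub, map_one] at h9
        rw [← h9]; ring
      have hgeo : (HNAux.zz p) ^ i - 1
          = (HNAux.zz p - 1) * (∑ j ∈ Finset.range i, (HNAux.zz p) ^ j) := by
        rw [mul_comm, geom_sum_mul]
      refine ⟨(∑ j ∈ Finset.range i, (HNAux.zz p) ^ j) ^ 2
        * HNAux.psi p ((HNAux.zz p) ^ i) (hpow i) r, ?_, ?_⟩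
      · exact ((HNAux.sum_pow_int p _ (HNAux.zz_int p) i).pow 2).mul
          (HNAux.psi_integral p _ (hpow i) ((HNAux.zz_int p).pow i) r)
      · rw [h8, hgeo]; ring
  -- pairing
  have hxbar : HNAux.psi p ((HNAux.zz p) ^ (p - 1)) (hpow (p - 1)) v
      = ∏ i ∈ Finset.Icc 1 ((p - 1) / 2),
          HNAux.psi p ((HNAux.zz p) ^ (p - i)) (hpow (p - i)) ↑w := by
    rw [hv, map_prod]
    refine Finset.prod_congr rfl fun i hi => ?_
    rw [HNAux.psi_apply_phiC p _ (hpow (p - 1)) i (hpow2 (p - 1) i) ↑w]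
    refine HNAux.psi_apply_congr p ?_ _ _ ↑w
    have hmem := Finset.mem_Icc.mp hi
    rw [← pow_mul, ← HNAux.pow_mod_eq' p (HNAux.zz_pow p) ((p - 1) * i),
      ← HNAux.pow_mod_eq' p (HNAux.zz_pow p) (p - i)]
    congr 1
    have h1i : 1 ≤ i := hmem.1
    have hip : i ≤ p := by omega
    have h1p : 1 ≤ p := by omega
    have harr : (p - 1) * i = (p - i) + (i - 1) * p := by
      zify [h1i, hip, h1p]
      ring
    rw [harr, Nat.add_mul_mod_self_right]
  have hpair : HNAux.psi p (HNAux.zz p) hζp v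
        * HNAux.psi p ((HNAux.zz p) ^ (p - 1)) (hpow (p - 1)) v
      = ∏ i ∈ Finset.Ioc 0 (p - 1), HNAux.psi p ((HNAux.zz p) ^ i) (hpow i) ↑w := by
    rw [hxprod, hxbar]
    have hicc : Finset.Icc 1 ((p - 1) / 2) = Finset.Ioc 0 ((p - 1) / 2) := by
      ext a
      simp [Finset.mem_Icc, Finset.mem_Ioc, Nat.succ_le_iff]
    have hsecond : ∏ i ∈ Finset.Icc 1 ((p - 1) / 2),
          HNAux.psi p ((HNAux.zz p) ^ (p - i)) (hpow (p - i)) ↑w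
        = ∏ i ∈ Finset.Ioc ((p - 1) / 2) (p - 1),
            HNAux.psi p ((HNAux.zz p) ^ i) (hpow i) ↑w := by
      refine Finset.prod_bij' (fun a _ => p - a) (fun b _ => p - b) ?_ ?_ ?_ ?_ ?_
      · intro a ha
        simp only [Finset.mem_Icc] at ha
        simp only [Finset.mem_Ioc]
        omega
      · intro b hb
        simp only [Finset.mem_Ioc] at hb
        simp only [Finset.mem_Icc]
        omega
      · intro a ha
        simp only [Finset.mem_Icc] at ha
        show p - (p - a) = a
        omega
      · intro b hb
        simp only [Finset.mem_Ioc] at hb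
        show p - (p - b) = b
        omega
      · intro a _
        rfl
    rw [hsecond, hicc, Finset.prod_Ioc_consecutive _ (Nat.zero_le _) (by omega)]
  -- norm of W
  have hWW' : HNAux.psi p (HNAux.zz p) hζp (↑w : MonoidAlgebra ℤ (Cp p))
      * HNAux.psi p (HNAux.zz p) hζp (↑w⁻¹ : MonoidAlgebra ℤ (Cp p)) = 1 := by
    rw [← map_mul, ← Units.val_mul, mul_inv_cancel, Units.val_one, map_one]
  obtain ⟨m, hm⟩ := HNAux.norm_int p _ (HNAux.psi_integral p _ hζp (HNAux.zz_int p)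
    (↑w : MonoidAlgebra ℤ (Cp p)))
  obtain ⟨m', hm'⟩ := HNAux.norm_int p _ (HNAux.psi_integral p _ hζp (HNAux.zz_int p)
    (↑w⁻¹ : MonoidAlgebra ℤ (Cp p)))
  have hmm' : m * m' = 1 := by
    have hq : ((m * m' : ℤ) : ℚ) = 1 := by
      push_cast
      rw [hm, hm', ← map_mul, hWW', map_one]
    exact_mod_cast hq
  have hxxbar : HNAux.psi p (HNAux.zz p) hζp v
        * HNAux.psi p ((HNAux.zz p) ^ (p - 1)) (hpow (p - 1)) v
      = ((m : ℤ) : KK p) := by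
    rw [hpair, HNAux.prod_psi_eq_norm p hpow ↑w, ← hm]
    exact map_intCast (algebraMap ℚ (KK p)) m
  haveI : NumberField (KK p) := IsCyclotomicExtension.numberField {(Pp p : ℕ)} ℚ (KK p)
  -- conjugation identity
  have hconj : ∀ τ : KK p →+* ℂ, (starRingEnd ℂ) (τ (HNAux.psi p (HNAux.zz p) hζp v))
      = τ (HNAux.psi p ((HNAux.zz p) ^ (p - 1)) (hpow (p - 1)) v) := by
    intro τ
    have hηp : (τ (HNAux.zz p)) ^ p = 1 := by rw [← map_pow, hζp, map_one]
    have hnormη : ‖τ (HNAux.zz p)‖ = 1 := by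
      have h10 : ‖τ (HNAux.zz p)‖ ^ p = 1 := by rw [← norm_pow, hηp, norm_one]
      rcases lt_trichotomy ‖τ (HNAux.zz p)‖ 1 with h | h | h
      · have := pow_lt_one₀ (norm_nonneg _) h hpp.ne_zero
        rw [h10] at this
        linarith
      · exact h
      · have := one_lt_pow₀ h hpp.ne_zero
        rw [h10] at this
        linarith
    have hconjη : (starRingEnd ℂ) (τ (HNAux.zz p)) = (τ (HNAux.zz p)) ^ (p - 1) := by
      have hinv : (τ (HNAux.zz p))⁻¹ = (starRingEnd ℂ) (τ (HNAux.zz p)) :=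
        RCLike.inv_eq_conj hnormη
      have hpe : (τ (HNAux.zz p)) ^ (p - 1) * τ (HNAux.zz p) = 1 := by
        rw [← pow_succ, Nat.sub_add_cancel hpp.one_lt.le, hηp]
      exact (hinv.symm.trans (eq_inv_of_mul_eq_one_left hpe).symm)
    have h12 : (starRingEnd ℂ) (τ (HNAux.psi p (HNAux.zz p) hζp v))
        = HNAux.psi p ((starRingEnd ℂ) (τ (HNAux.zz p)))
            (by rw [← map_pow, ← map_pow, hζp, map_one, map_one]) v :=
      RingHom.congr_fun (HNAux.psi_comp p ((starRingEnd ℂ).comp τ) (HNAux.zz p) hζp) v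
    have h13 : τ (HNAux.psi p ((HNAux.zz p) ^ (p - 1)) (hpow (p - 1)) v)
        = HNAux.psi p (τ ((HNAux.zz p) ^ (p - 1)))
            (by rw [← map_pow, hpow, map_one]) v :=
      RingHom.congr_fun (HNAux.psi_comp p τ ((HNAux.zz p) ^ (p - 1)) (hpow (p - 1))) v
    rw [h12, h13]
    refine HNAux.psi_apply_congr p ?_ _ _ v
    rw [hconjη, map_pow]
  -- m = 1 and all conjugates of x have norm 1
  have hτnormsq : ∀ τ : KK p →+* ℂ,
      ((Complex.normSq (τ (HNAux.psi p (HNAux.zz p) hζp v)) : ℝ) : ℂ) = ((m : ℤ) : ℂ) := by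
    intro τ
    rw [← Complex.mul_conj, hconj τ, ← map_mul, hxxbar, map_intCast]
  haveI : Algebra.IsAlgebraic ℚ (KK p) := Algebra.IsAlgebraic.of_finite ℚ (KK p)
  have τ0 : KK p →+* ℂ := (IsAlgClosed.lift (R := ℚ) (S := KK p) (M := ℂ)).toRingHom
  have hm1 : m = 1 := by
    rcases Int.isUnit_iff.mp (IsUnit.of_mul_eq_one m' hmm') with h | h
    · exact h
    · exfalso
      have h11 := hτnormsq τ0
      rw [h] at h11
      have h14 := congrArg Complex.re h11
      simp only [Complex.ofReal_re, Complex.intCast_re] at h14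
      have := Complex.normSq_nonneg (τ0 (HNAux.psi p (HNAux.zz p) hζp v))
      rw [h14] at this
      norm_num at this
  have hτnorm : ∀ τ : KK p →+* ℂ, ‖τ (HNAux.psi p (HNAux.zz p) hζp v)‖ = 1 := by
    intro τ
    have h11 := hτnormsq τ
    rw [hm1] at h11
    have h15 : Complex.normSq (τ (HNAux.psi p (HNAux.zz p) hζp v)) = 1 := by
      exact_mod_cast h11
    have h16 : ‖τ (HNAux.psi p (HNAux.zz p) hζp v)‖ ^ 2 = 1 := by
      rw [← Complex.normSq_eq_norm_sq, h15]
    have h17 := norm_nonneg (τ (HNAux.psi p (HNAux.zz p) hζp v))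
    have h18 : (‖τ (HNAux.psi p (HNAux.zz p) hζp v)‖ - 1)
        * (‖τ (HNAux.psi p (HNAux.zz p) hζp v)‖ + 1) = 0 := by
      linear_combination h16
    rcases mul_eq_zero.mp h18 with h | h
    · linarith
    · linarith
  -- Kronecker
  have hxint : IsIntegral ℤ (HNAux.psi p (HNAux.zz p) hζp v) :=
    HNAux.psi_integral p _ hζp (HNAux.zz_int p) v
  obtain ⟨k, hk0, hxk⟩ :=
    NumberField.Embeddings.pow_eq_one_of_norm_eq_one (KK p) ℂ hxint hτnorm
  -- x = 1
  have hx1 : HNAux.psi p (HNAux.zz p) hζp v = 1 :=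
    HNAux.root_eq_one p hp2 _ hxint k hk0 hxk c hcint (by rw [hcongx]; ring)
  -- conclude
  have hv0 : v - 1 = 0 :=
    HNAux.psi_inj p (v - 1) (by rw [map_sub, map_one, hA, sub_self])
      (by rw [map_sub, map_one, hx1, sub_self])
  exact sub_eq_zero.mp hv0
end
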